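/- arXiv:1612.07768 — 5 statements merged into one kernel-verified Lean document; each statement's English description precedes it below -/
import Mathlib

section
/- Every finite connected graph G on n ≥ 3 vertices satisfies srvc(G) ≤ n − 2, and hence also rvc(G) ≤ n − 2. -/
open SimpleGraph

/-- The internal vertices of a walk: its support with the two endpoints removed. -/
def internalVerts {V : Type} {G : SimpleGraph V} {u v : V} (p : G.Walk u v) : List V :=
  p.support.tail.dropLast

/-- A walk/path is *vertex rainbow* under the vertex coloring `ψ` if all of its internal
vertices have pairwise distinct colors. -/
def IsVertexRainbow {V C : Type} {G : SimpleGraph V} (ψ : V → C) {u v : V}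
    (p : G.Walk u v) : Prop :=
  ((internalVerts p).map ψ).Nodup

/-- `G` is rainbow vertex connected under `ψ` if every pair of distinct vertices is joined
by a vertex rainbow path. -/
def RainbowVertexConnected {V C : Type} (G : SimpleGraph V) (ψ : V → C) : Prop :=
  ∀ u v : V, u ≠ v → ∃ p : G.Walk u v, p.IsPath ∧ IsVertexRainbow ψ p

/-- `G` is strongly rainbow vertex connected under `ψ` if every pair of distinct vertices is
joined by a shortest path that is vertex rainbow. -/
def StrongRainbowVertexConnected {V C : Type} (G : SimpleGraph V) (ψ : V → C) : Prop :=
  ∀ u v : V, u ≠ v →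
    ∃ p : G.Walk u v, p.IsPath ∧ p.length = G.dist u v ∧ IsVertexRainbow ψ p

/-- The rainbow vertex connection number: the least `k` such that some coloring with `k`
colors makes `G` rainbow vertex connected. -/
noncomputable def rvc {V : Type} (G : SimpleGraph V) : ℕ :=
  sInf {k : ℕ | ∃ ψ : V → Fin k, RainbowVertexConnected G ψ}

/-- The strong rainbow vertex connection number: the least `k` such that some coloring with
`k` colors makes `G` strongly rainbow vertex connected. -/
noncomputable def srvc {V : Type} (G : SimpleGraph V) : ℕ :=
  sInf {k : ℕ | ∃ ψ : V → Fin k, StrongRainbowVertexConnected G ψ}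

section Aux

variable {V : Type} {G : SimpleGraph V} {u v a b : V}

lemma internal_mem_support {p : G.Walk u v} (h : a ∈ internalVerts p) : a ∈ p.support :=
  List.tail_subset _ (List.dropLast_subset _ h)

lemma internal_ne_left {p : G.Walk u v} (hp : p.IsPath) (h : a ∈ internalVerts p) : a ≠ u := by
  have hnd := hp.support_nodup
  have htail : a ∈ p.support.tail := List.dropLast_subset _ h
  rw [p.support_eq_cons] at hnd
  rintro rfl
  exact (List.nodup_cons.mp hnd).1 htail

lemma internal_ne_right {p : G.Walk u v} (hp : p.IsPath) (h : a ∈ internalVerts p) : a ≠ v := by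
  have hnd : p.support.tail.Nodup := by
    have := hp.support_nodup
    rw [p.support_eq_cons] at this
    exact (List.nodup_cons.mp this).2
  have htne : p.support.tail ≠ [] := by
    intro hnil
    rw [internalVerts, hnil] at h
    simp at h
  have hlast : p.support.tail.getLast htne = v := by
    rw [List.getLast_tail]
    exact p.getLast_support
  have hsplit := List.dropLast_append_getLast htne
  rw [hlast] at hsplit
  rw [← hsplit] at hnd
  have hdisj := List.disjoint_of_nodup_append hnd
  intro rfl'
  exact hdisj h (by simp [rfl'])

lemma internal_length {p : G.Walk u v} : (internalVerts p).length = p.length - 1 := by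
  simp [internalVerts, p.length_support]

/-- Two distinct internal vertices on a shortest path are at distance at least two less
than the distance between the endpoints. -/
lemma dist_internal_add_two_le [DecidableEq V] {p : G.Walk u v} (hp : p.IsPath)
    (hlen : p.length = G.dist u v) (ha : a ∈ internalVerts p) (hb : b ∈ internalVerts p)
    (hab : a ≠ b) : G.dist a b + 2 ≤ G.dist u v := by
  have hau : a ≠ u := internal_ne_left hp ha
  have hav : a ≠ v := internal_ne_right hp ha
  have hbu : b ≠ u := internal_ne_left hp hb
  have hbv : b ≠ v := internal_ne_right hp hb
  have has : a ∈ p.support := internal_mem_support ha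
  have hbs : b ∈ p.support := internal_mem_support hb
  set q := p.takeUntil a has with hq
  set r := p.dropUntil a has with hr
  have hspec : q.append r = p := p.take_spec has
  have hlen2 : q.length + r.length = G.dist u v := by
    rw [← hlen, ← hspec, Walk.length_append]
  have hq1 : 1 ≤ q.length := by
    rcases Nat.eq_zero_or_pos q.length with h0 | h0
    · exact absurd (Walk.eq_of_length_eq_zero h0).symm hau
    · exact h0
  have hr1 : 1 ≤ r.length := by
    rcases Nat.eq_zero_or_pos r.length with h0 | h0
    · exact absurd (Walk.eq_of_length_eq_zero h0) hav
    · exact h0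
  have hbmem : b ∈ q.support ∨ b ∈ r.support := by
    rw [← hspec, Walk.mem_support_append_iff] at hbs
    exact hbs
  rcases hbmem with hbq | hbr
  · -- b comes before a
    set q1 := q.takeUntil b hbq
    set q2 := q.dropUntil b hbq
    have hspec2 : q1.append q2 = q := q.take_spec hbq
    have hlq : q1.length + q2.length = q.length := by
      rw [← hspec2, Walk.length_append]
    have hq11 : 1 ≤ q1.length := by
      rcases Nat.eq_zero_or_pos q1.length with h0 | h0
      · exact absurd (Walk.eq_of_length_eq_zero h0).symm hbu
      · exact h0
    have hd : G.dist b a ≤ q2.length := dist_le q2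
    rw [dist_comm] at hd
    omega
  · -- b comes after a
    set r1 := r.takeUntil b hbr
    set r2 := r.dropUntil b hbr
    have hspec2 : r1.append r2 = r := r.take_spec hbr
    have hlr : r1.length + r2.length = r.length := by
      rw [← hspec2, Walk.length_append]
    have hr21 : 1 ≤ r2.length := by
      rcases Nat.eq_zero_or_pos r2.length with h0 | h0
      · exact absurd (Walk.eq_of_length_eq_zero h0) hbv
      · exact h0
    have hd : G.dist a b ≤ r1.length := dist_le r1
    omega

lemma nodup_of_length_le_one {α : Type*} {l : List α} (h : l.length ≤ 1) : l.Nodup := by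
  match l with
  | [] => exact List.nodup_nil
  | [x] => exact List.nodup_singleton x
  | x :: y :: t => simp at h

/-- If `dist u v ≥ 1` then `u` has a neighbour one step closer to `v`. -/
lemma exists_second (hG : G.Connected) (h1 : 1 ≤ G.dist u v) :
    ∃ w, G.Adj u w ∧ G.dist w v + 1 = G.dist u v := by
  obtain ⟨p, hp, hl⟩ := hG.exists_path_of_dist u v
  cases p with
  | nil => simp [← hl] at h1
  | @cons _ w _ hadj q =>
    refine ⟨w, hadj, ?_⟩
    rw [Walk.length_cons] at hl
    have h2 : G.dist w v ≤ q.length := dist_le q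
    have h3 : G.dist u v ≤ G.dist u w + G.dist w v := hG.dist_triangle
    have h4 : G.dist u w = 1 := dist_eq_one_iff_adj.mpr hadj
    omega

end Aux

/-- Every finite connected graph on `n ≥ 3` vertices satisfies `srvc(G) ≤ n - 2`, and hence
also `rvc(G) ≤ n - 2`. -/
theorem stmt3 {V : Type} [Fintype V] (G : SimpleGraph V) (hG : G.Connected)
    (hcard : 3 ≤ Fintype.card V) :
    srvc G ≤ Fintype.card V - 2 ∧ rvc G ≤ Fintype.card V - 2 := by
  classical
  set n := Fintype.card V with hn
  -- It suffices to produce a strongly rainbow vertex connected coloring with n - 2 colors.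
  suffices hψ : ∃ ψ : V → Fin (n - 2), StrongRainbowVertexConnected G ψ by
    obtain ⟨ψ, hψ⟩ := hψ
    constructor
    · exact Nat.sInf_le ⟨ψ, hψ⟩
    · refine Nat.sInf_le ⟨ψ, fun u v huv => ?_⟩
      obtain ⟨p, hp, _, hrb⟩ := hψ u v huv
      exact ⟨p, hp, hrb⟩
  -- Pick a diametral pair (s, t).
  have hne : Nonempty V := Fintype.card_pos_iff.mp (by omega)
  obtain ⟨⟨s, t⟩, -, hmax⟩ := Finset.exists_max_image (Finset.univ ×ˢ Finset.univ)
    (fun q : V × V => G.dist q.1 q.2) ⟨(Classical.arbitrary V, Classical.arbitrary V), by simp⟩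
  have hdmax : ∀ a b : V, G.dist a b ≤ G.dist s t := fun a b => hmax (a, b) (by simp)
  rcases le_or_gt (G.dist s t) 2 with hd2 | hd3
  · -- small diameter: any coloring works
    refine ⟨fun _ => ⟨0, by omega⟩, fun u v huv => ?_⟩
    obtain ⟨p, hp, hl⟩ := hG.exists_path_of_dist u v
    refine ⟨p, hp, hl, ?_⟩
    apply nodup_of_length_le_one
    rw [List.length_map, internal_length, hl]
    have := hdmax u v
    omega
  · -- diameter at least 3
    obtain ⟨x, hxa, hxd⟩ := exists_second hG (u := s) (v := t) (by omega)
    obtain ⟨y, hya, hyd'⟩ := exists_second hG (u := t) (v := s) (by rw [dist_comm]; omega)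
    have hyd : G.dist s y + 1 = G.dist s t := by
      rw [dist_comm (u := s) (v := y), hyd', dist_comm]
    clear hyd'
    have hst : s ≠ t := by
      intro h
      rw [h, SimpleGraph.dist_self] at hd3
      omega
    have hsx : s ≠ x := hxa.ne
    have hty : t ≠ y := hya.ne
    have hsy : s ≠ y := by
      intro h; rw [← h, SimpleGraph.dist_self] at hyd; omega
    have hxt : x ≠ t := by
      intro h; rw [h, SimpleGraph.dist_self] at hxd; omega
    have hxy : x ≠ y := by
      intro h
      have h1 : G.dist s x = 1 := dist_eq_one_iff_adj.mpr hxa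
      rw [h] at h1
      omega
    -- the identification map
    set f : V → V := fun w => if w = y then s else if w = t then x else w with hf
    have hfmem : ∀ w, f w ∈ ({y, t}ᶜ : Finset V) := by
      intro w
      simp only [hf, Finset.mem_compl, Finset.mem_insert, Finset.mem_singleton]
      split_ifs with h1 h2
      · push_neg; exact ⟨hsy, hst⟩
      · push_neg; exact ⟨fun h => hxy h, hxt⟩
      · push_neg; exact ⟨h1, h2⟩
    have hcardc : Fintype.card ({y, t}ᶜ : Finset V) = n - 2 := by
      rw [Fintype.card_coe, Finset.card_compl, Finset.card_insert_of_notMem (by simp [hty.symm]),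
        Finset.card_singleton]
    have e : ({y, t}ᶜ : Finset V) ≃ Fin (n - 2) := Fintype.equivFinOfCardEq hcardc
    refine ⟨fun w => e ⟨f w, hfmem w⟩, fun u v huv => ?_⟩
    obtain ⟨p, hp, hl⟩ := hG.exists_path_of_dist u v
    refine ⟨p, hp, hl, ?_⟩
    -- the collision classes are {s, y} and {x, t}, each pair at distance d - 1
    have hcol : ∀ a b : V, a ≠ b → f a = f b → G.dist s t ≤ G.dist a b + 1 := by
      intro a b hab hfab
      simp only [hf] at hfab
      have hkey : G.dist a b + 1 = G.dist s t := by
        by_cases ha1 : a = y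
        · by_cases hb1 : b = y
          · exact absurd (ha1.trans hb1.symm) hab
          · by_cases hb2 : b = t
            · rw [if_pos ha1, if_neg hb1, if_pos hb2] at hfab
              exact absurd hfab hsx
            · rw [if_pos ha1, if_neg hb1, if_neg hb2] at hfab
              rw [ha1, ← hfab, dist_comm (u := y)]
              exact hyd
        · by_cases ha2 : a = t
          · by_cases hb1 : b = y
            · rw [if_neg ha1, if_pos ha2, if_pos hb1] at hfab
              exact absurd hfab.symm hsx
            · by_cases hb2 : b = t
              · exact absurd (ha2.trans hb2.symm) hab
              · rw [if_neg ha1, if_pos ha2, if_neg hb1, if_neg hb2] at hfab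
                rw [ha2, ← hfab, dist_comm (u := t)]
                exact hxd
          · by_cases hb1 : b = y
            · rw [if_neg ha1, if_neg ha2, if_pos hb1] at hfab
              rw [hfab, hb1]
              exact hyd
            · by_cases hb2 : b = t
              · rw [if_neg ha1, if_neg ha2, if_neg hb1, if_pos hb2] at hfab
                rw [hfab, hb2]
                exact hxd
              · rw [if_neg ha1, if_neg ha2, if_neg hb1, if_neg hb2] at hfab
                exact absurd hfab hab
      omega
    -- internal vertices are nodup
    have hnd : (internalVerts p).Nodup :=
      ((p.support.tail.dropLast_sublist).trans (p.support.tail_sublist)).nodup hp.support_nodup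
    refine List.Nodup.map_on ?_ hnd
    intro a ha b hb hab
    by_contra hne'
    have h1 : f a = f b := congrArg Subtype.val (e.injective hab)
    have h2 := hcol a b hne' h1
    have h3 := dist_internal_add_two_le hp hl ha hb hne'
    have h4 := hdmax u v
    omega
end

section
/- Let G be a block graph with a vertex coloring ψ. Then G is rainbow vertex connected under ψ if and only if G is strongly rainbow vertex connected under ψ. -/
open SimpleGraph

/-- A set of vertices induces a 2-connected subgraph: it has at least 3 vertices, the induced
subgraph is connected, and removing any single vertex keeps it connected (no cut vertex). -/
def IsTwoConnectedSet {V : Type} (G : SimpleGraph V) (S : Set V) : Prop :=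
  3 ≤ S.ncard ∧ (G.induce S).Connected ∧ ∀ v ∈ S, (G.induce (S \ {v})).Connected

/-- A block graph: a connected graph in which every block (maximal 2-connected subgraph)
is a clique. -/
def IsBlockGraph {V : Type} (G : SimpleGraph V) : Prop :=
  G.Connected ∧ ∀ S : Set V, Maximal (IsTwoConnectedSet G) S → G.IsClique S

namespace Aux
variable {V : Type} {G : SimpleGraph V}

lemma reachable_induce {S : Set V} {x y : V} (p : G.Walk x y)
    (hp : ∀ z ∈ p.support, z ∈ S) (hx : x ∈ S) (hy : y ∈ S) :
    (G.induce S).Reachable ⟨x, hx⟩ ⟨y, hy⟩ := by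
  induction p with
  | nil => rfl
  | @cons a b c h q ih =>
    have hb : b ∈ S := hp b (by simp)
    refine Reachable.trans ?_ (ih (fun z hz => hp z (by simp [hz])) hb hy)
    exact SimpleGraph.Adj.reachable (by simpa using h)

lemma mem_support_closed_iff {u z : V} {c : G.Walk u u} (hc : ¬ c.Nil) :
    z ∈ c.support ↔ z ∈ c.support.tail := by
  obtain ⟨w, h, q, rfl⟩ := SimpleGraph.Walk.not_nil_iff.mp hc
  simp only [SimpleGraph.Walk.support_cons, List.tail_cons, List.mem_cons]
  constructor
  · rintro (rfl | hz)
    · exact q.end_mem_support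
    · exact hz
  · exact Or.inr

lemma exists_maximal_two_connected [Fintype V] {S : Set V} (hS : IsTwoConnectedSet G S) :
    ∃ T, S ⊆ T ∧ Maximal (IsTwoConnectedSet G) T := by
  classical
  obtain ⟨T, hT, hmax⟩ := Set.Finite.exists_maximalFor id
    {T : Set V | IsTwoConnectedSet G T ∧ S ⊆ T} (Set.toFinite _) ⟨S, hS, subset_rfl⟩
  refine ⟨T, hT.2, hT.1, fun T' hT' hle => ?_⟩
  have := hmax ⟨hT', hT.2.trans hle⟩ hle
  simp only [id] at this
  exact this

lemma cycle_twoConnected {u : V} {c : G.Walk u u} (hc : c.IsCycle) :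
    IsTwoConnectedSet G {x | x ∈ c.support} := by
  classical
  have hlen := hc.three_le_length
  have hnn : ¬ c.Nil := by
    rw [SimpleGraph.Walk.not_nil_iff_lt_length]; omega
  refine ⟨?_, ?_, ?_⟩
  · -- cardinality
    have hset : {x | x ∈ c.support} = ↑(c.support.tail.toFinset) := by
      ext x
      simp [mem_support_closed_iff hnn]
    rw [hset, Set.ncard_coe_finset, List.toFinset_card_of_nodup hc.support_nodup]
    have := c.length_support
    have htl : c.support.tail.length = c.length := by
      have : c.support.length = c.support.tail.length + 1 := by
        cases hs : c.support with
        | nil => exact absurd hs c.support_ne_nil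
        | cons a l => simp
      omega
    omega
  · -- connected
    rw [connected_iff]
    refine ⟨?_, ⟨⟨u, c.start_mem_support⟩⟩⟩
    have key : ∀ (x : V) (hx : x ∈ c.support),
        (G.induce {x | x ∈ c.support}).Reachable ⟨u, c.start_mem_support⟩ ⟨x, hx⟩ := by
      intro x hx
      exact reachable_induce (c.takeUntil x hx)
        (fun z hz => c.support_takeUntil_subset hx hz) c.start_mem_support hx
    rintro ⟨x, hx⟩ ⟨y, hy⟩
    exact (key x hx).symm.trans (key y hy)
  · -- removing a vertex
    intro v hv
    have hv' : v ∈ c.support := hv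
    set c' := c.rotate v hv' with hc'def
    have hc' : c'.IsCycle := hc.rotate hv'
    have hlen' : c'.length = c.length := by
      have h2 := congrArg SimpleGraph.Walk.length (c.take_spec hv')
      rw [SimpleGraph.Walk.length_append] at h2
      simp only [hc'def, SimpleGraph.Walk.rotate, SimpleGraph.Walk.length_append]
      omega
    have hnn' : ¬ c'.Nil := by
      rw [SimpleGraph.Walk.not_nil_iff_lt_length]; omega
    -- support set of c' equals support set of c
    have hsupp : ∀ z, z ∈ c'.support ↔ z ∈ c.support := by
      intro z
      rw [mem_support_closed_iff hnn', mem_support_closed_iff hnn]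
      exact (SimpleGraph.Walk.support_rotate c v hv').mem_iff
    obtain ⟨w, hvw, q, hq⟩ := SimpleGraph.Walk.not_nil_iff.mp hnn'
    have hqpath : q.IsPath := by
      have h1 : q.support.Nodup := by
        have := hc'.support_nodup
        rw [hq] at this
        simpa using this
      have h2 : q.IsTrail := by
        have := hc'.isCircuit.isTrail
        rw [hq] at this
        exact this.of_cons
      exact ⟨h2, h1⟩
    set Q := q.reverse with hQdef
    have hQpath : Q.IsPath := hqpath.reverse
    have hQnn : ¬ Q.Nil := by
      rw [SimpleGraph.Walk.not_nil_iff_lt_length]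
      have : q.length + 1 = c'.length := by rw [hq]; simp
      simp only [hQdef, SimpleGraph.Walk.length_reverse]
      omega
    obtain ⟨s, hvs, Q'', hQ''⟩ := SimpleGraph.Walk.not_nil_iff.mp hQnn
    have hQ''path : Q''.IsPath ∧ v ∉ Q''.support := by
      have := hQpath
      rw [hQ'', SimpleGraph.Walk.cons_isPath_iff] at this
      exact this
    -- support set identification
    have hSdiff : {x | x ∈ c.support} \ {v} = {x | x ∈ Q''.support} := by
      ext x
      have h1 : x ∈ c.support ↔ x = v ∨ x ∈ q.support := by
        rw [← hsupp, hq]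
        simp
      have h2 : x ∈ q.support ↔ x ∈ Q.support := by
        simp [hQdef]
      have h3 : x ∈ Q.support ↔ x = v ∨ x ∈ Q''.support := by
        rw [hQ'']; simp
      simp only [Set.mem_diff, Set.mem_setOf_eq, Set.mem_singleton_iff]
      constructor
      · rintro ⟨hxc, hxv⟩
        rcases (h1.mp hxc) with rfl | hxq
        · exact absurd rfl hxv
        · rcases h3.mp (h2.mp hxq) with rfl | h
          · exact absurd rfl hxv
          · exact h
      · intro hx
        refine ⟨h1.mpr (Or.inr (h2.mpr (h3.mpr (Or.inr hx)))), ?_⟩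
        rintro rfl
        exact hQ''path.2 hx
    rw [hSdiff, connected_iff]
    refine ⟨?_, ⟨⟨w, Q''.end_mem_support⟩⟩⟩
    have key : ∀ (x : V) (hx : x ∈ Q''.support),
        (G.induce {x | x ∈ Q''.support}).Reachable ⟨x, hx⟩ ⟨w, Q''.end_mem_support⟩ := by
      intro x hx
      exact reachable_induce (Q''.dropUntil x hx)
        (fun z hz => Q''.support_dropUntil_subset hx hz) hx Q''.end_mem_support
    rintro ⟨x, hx⟩ ⟨y, hy⟩
    exact (key x hx).trans (key y hy).symm

lemma adj_of_mem_cycle_support [Fintype V] (hG : IsBlockGraph G) {u : V} {c : G.Walk u u}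
    (hc : c.IsCycle) {a b : V} (ha : a ∈ c.support) (hb : b ∈ c.support) (hab : a ≠ b) :
    G.Adj a b := by
  obtain ⟨T, hST, hmax⟩ := exists_maximal_two_connected (cycle_twoConnected hc)
  exact hG.2 T hmax (hST ha) (hST hb) hab

lemma adj_of_common_neighbor [Fintype V] (hG : IsBlockGraph G) {u a b : V}
    (hab : a ≠ b) (hua : G.Adj u a) (hub : G.Adj u b) (w : G.Walk a b)
    (hw : u ∉ w.support) : G.Adj a b := by
  classical
  set P := w.bypass with hPdef
  have hP : P.IsPath := w.bypass_isPath
  have hPu : u ∉ P.support := fun h => hw (w.support_bypass_subset h)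
  set Q : G.Walk a u := P.concat hub.symm with hQdef
  have hQ : Q.IsPath := by
    rw [← SimpleGraph.Walk.isPath_reverse_iff, hQdef, SimpleGraph.Walk.reverse_concat]
    refine hP.reverse.cons ?_
    rw [SimpleGraph.Walk.support_reverse, List.mem_reverse]
    exact hPu
  have hedge : s(u, a) ∉ Q.edges := by
    rw [hQdef, SimpleGraph.Walk.concat_eq_append, SimpleGraph.Walk.edges_append]
    simp only [List.mem_append, SimpleGraph.Walk.edges_cons, SimpleGraph.Walk.edges_nil,
      List.mem_singleton, not_or]
    constructor
    · intro h
      exact hPu (P.fst_mem_support_of_mem_edges h)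
    · intro h
      rw [Sym2.eq_iff] at h
      rcases h with ⟨h1, h2⟩ | ⟨h1, h2⟩
      · exact hub.ne h1
      · exact hab h2
  have hcyc : (SimpleGraph.Walk.cons hua Q).IsCycle :=
    (SimpleGraph.Walk.cons_isCycle_iff Q hua).mpr ⟨hQ, hedge⟩
  refine adj_of_mem_cycle_support hG hcyc ?_ ?_ hab
  · rw [SimpleGraph.Walk.support_cons]
    exact List.mem_cons_of_mem _ Q.start_mem_support
  · rw [SimpleGraph.Walk.support_cons]
    refine List.mem_cons_of_mem _ ?_
    rw [hQdef, SimpleGraph.Walk.concat_eq_append, SimpleGraph.Walk.mem_support_append_iff]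
    exact Or.inl P.end_mem_support

lemma dist_lt_of_mem_support_geodesic {u v x : V} (g : G.Walk u v) (hg : g.length = G.dist u v)
    (hx : x ∈ g.support) (hxu : x ≠ u) : G.dist x v < G.dist u v := by
  classical
  have hsplit := congrArg SimpleGraph.Walk.length (g.take_spec hx)
  rw [SimpleGraph.Walk.length_append] at hsplit
  have ht : 1 ≤ (g.takeUntil x hx).length := by
    rcases Nat.eq_zero_or_pos (g.takeUntil x hx).length with h0 | h1
    · exact absurd (SimpleGraph.Walk.eq_of_length_eq_zero h0).symm hxu
    · exact h1
  have hd : G.dist x v ≤ (g.dropUntil x hx).length := SimpleGraph.dist_le _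
  omega

open SimpleGraph.Walk in
lemma exists_geodesic_subset [Fintype V] (hG : IsBlockGraph G) :
    ∀ {u v : V} (p : G.Walk u v), p.IsPath →
      ∃ q : G.Walk u v, q.IsPath ∧ q.length = G.dist u v ∧ ∀ z ∈ q.support, z ∈ p.support := by
  classical
  intro u v p
  induction p with
  | nil =>
    intro _
    exact ⟨.nil, SimpleGraph.Walk.IsPath.nil, by simp [SimpleGraph.dist_self], by simp⟩
  | @cons u a v h p₁ ih =>
    intro hp
    rw [cons_isPath_iff] at hp
    obtain ⟨hp₁, hu⟩ := hp
    have hcon := hG.1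
    have huv : u ≠ v := fun h' => hu (h' ▸ p₁.end_mem_support)
    have hR : G.Reachable u v := hcon u v
    have hd1 : 0 < G.dist u v := hR.pos_dist_of_ne huv
    by_cases hdle : G.dist u v = 1
    · have hadj : G.Adj u v := SimpleGraph.dist_eq_one_iff_adj.mp hdle
      refine ⟨.cons hadj .nil, ?_, by simp [hdle], ?_⟩
      · rw [cons_isPath_iff]
        exact ⟨SimpleGraph.Walk.IsPath.nil, by simpa using huv⟩
      · intro z hz
        simp only [support_cons, support_nil, List.mem_cons, List.mem_singleton] at hz ⊢
        rcases hz with rfl | hz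
        · exact Or.inl rfl
        · simp only [List.not_mem_nil, or_false] at hz
          subst hz
          exact Or.inr p₁.end_mem_support
    · have hd2 : 2 ≤ G.dist u v := by omega
      obtain ⟨r, hrpath, hrlen, hrsub⟩ := ih hp₁
      by_cases hav : G.dist a v < G.dist u v
      · have hle : G.dist u v ≤ G.dist a v + 1 := by
          have := SimpleGraph.dist_le (SimpleGraph.Walk.cons h r)
          rw [length_cons, hrlen] at this
          omega
        refine ⟨.cons h r, ?_, ?_, ?_⟩
        · exact hrpath.cons (fun hh => hu (hrsub _ hh))
        · rw [length_cons, hrlen]; omega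
        · intro z hz
          rw [support_cons, List.mem_cons] at hz ⊢
          rcases hz with rfl | hz
          · exact Or.inl rfl
          · exact Or.inr (hrsub _ hz)
      · push_neg at hav
        obtain ⟨g, hg⟩ := hR.exists_walk_length_eq_dist
        have hgnn : ¬ g.Nil := by rw [not_nil_iff_lt_length]; omega
        obtain ⟨b, hub, g₁, hgdef⟩ := not_nil_iff.mp hgnn
        have hg₁len : g₁.length + 1 = G.dist u v := by
          rw [hgdef, length_cons] at hg
          omega
        have hdbv : G.dist b v = G.dist u v - 1 := by
          have h1 : G.dist b v ≤ g₁.length := SimpleGraph.dist_le g₁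
          obtain ⟨gb, hgb⟩ := (hcon b v).exists_walk_length_eq_dist
          have h2 := SimpleGraph.dist_le (SimpleGraph.Walk.cons hub gb)
          rw [length_cons, hgb] at h2
          omega
        have hba : b ≠ a := by
          rintro rfl
          omega
        have hug₁ : u ∉ g₁.support := by
          intro hmem
          have := dist_lt_of_mem_support_geodesic g₁ (by omega) hmem (fun e => hub.ne' e.symm)
          omega
        have hadj_ab : G.Adj a b := by
          refine adj_of_common_neighbor hG (fun e => hba e.symm) h hub
            (p₁.append g₁.reverse) ?_
          rw [mem_support_append_iff]
          rintro (h1 | h1)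
          · exact hu h1
          · rw [support_reverse, List.mem_reverse] at h1
            exact hug₁ h1
        have hdav : G.dist a v = G.dist u v := by
          obtain ⟨gb, hgb⟩ := (hcon b v).exists_walk_length_eq_dist
          have h2 := SimpleGraph.dist_le (SimpleGraph.Walk.cons hadj_ab gb)
          rw [length_cons, hgb] at h2
          omega
        have hrnn : ¬ r.Nil := by rw [not_nil_iff_lt_length]; omega
        obtain ⟨c, hac, r₂, hrdef⟩ := not_nil_iff.mp hrnn
        have hr₂ : r₂.IsPath ∧ a ∉ r₂.support := by
          rw [hrdef, cons_isPath_iff] at hrpath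
          exact hrpath
        have hr₂len : r₂.length + 1 = G.dist a v := by
          rw [hrdef, length_cons] at hrlen
          omega
        have hdcv : G.dist c v = G.dist u v - 1 := by
          have h1 : G.dist c v ≤ r₂.length := SimpleGraph.dist_le r₂
          obtain ⟨gc, hgc⟩ := (hcon c v).exists_walk_length_eq_dist
          have h2 := SimpleGraph.dist_le (SimpleGraph.Walk.cons hac gc)
          rw [length_cons, hgc] at h2
          omega
        have hcmem : c ∈ p₁.support := hrsub c (by rw [hrdef]; simp)
        have huc : u ≠ c := fun e => hu (e ▸ hcmem)
        have hau : a ≠ u := fun e => hu (e ▸ p₁.start_mem_support)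
        have hag : a ∉ g.support := by
          intro hmem
          have := dist_lt_of_mem_support_geodesic g hg hmem hau
          omega
        have hadj_uc : G.Adj u c := by
          refine adj_of_common_neighbor hG huc h.symm hac (g.append r₂.reverse) ?_
          rw [mem_support_append_iff]
          rintro (h1 | h1)
          · exact hag h1
          · rw [support_reverse, List.mem_reverse] at h1
            exact hr₂.2 h1
        have hr₂sub : ∀ z ∈ r₂.support, z ∈ p₁.support := by
          intro z hz
          exact hrsub z (by rw [hrdef, support_cons]; exact List.mem_cons_of_mem _ hz)
        refine ⟨.cons hadj_uc r₂, ?_, ?_, ?_⟩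
        · exact hr₂.1.cons (fun hh => hu (hr₂sub _ hh))
        · rw [length_cons]; omega
        · intro z hz
          rw [support_cons, List.mem_cons] at hz ⊢
          rcases hz with rfl | hz
          · exact Or.inl rfl
          · exact Or.inr (hr₂sub _ hz)

end Aux

namespace Aux2

lemma internal_nodup {V : Type} {G : SimpleGraph V} {u v : V} {p : G.Walk u v}
    (hp : p.IsPath) : (internalVerts p).Nodup :=
  ((List.dropLast_sublist _).trans (List.tail_sublist _)).nodup hp.support_nodup

lemma mem_internalVerts {V : Type} {G : SimpleGraph V} {u v x : V} {p : G.Walk u v}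
    (hp : p.IsPath) : x ∈ internalVerts p ↔ x ∈ p.support ∧ x ≠ u ∧ x ≠ v := by
  cases p with
  | nil => simp [internalVerts]
  | @cons u w v h q =>
    have hne : q.support ≠ [] := q.support_ne_nil
    have hsplit : q.support.dropLast ++ [v] = q.support := by
      have hlast : q.support.getLast hne = v := q.getLast_support
      have h2 := List.dropLast_append_getLast hne
      rw [hlast] at h2
      exact h2
    have hnod : (SimpleGraph.Walk.cons h q).support.Nodup := hp.support_nodup
    rw [SimpleGraph.Walk.support_cons, List.nodup_cons] at hnod
    obtain ⟨huq, hqnod⟩ := hnod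
    have hvd : v ∉ q.support.dropLast := by
      intro hmem
      rw [← hsplit, List.nodup_append] at hqnod
      exact hqnod.2.2 v hmem v (List.mem_singleton_self v) rfl
    have hint : internalVerts (SimpleGraph.Walk.cons h q) = q.support.dropLast := by
      simp [internalVerts]
    rw [hint, SimpleGraph.Walk.support_cons, List.mem_cons]
    constructor
    · intro hx
      have hxq : x ∈ q.support := by
        rw [← hsplit]
        exact List.mem_append_left _ hx
      refine ⟨Or.inr hxq, ?_, ?_⟩
      · rintro rfl; exact huq hxq
      · rintro rfl; exact hvd hx
    · rintro ⟨hx, hxu, hxv⟩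
      rcases hx with rfl | hxq
      · exact absurd rfl hxu
      · rw [← hsplit, List.mem_append, List.mem_singleton] at hxq
        rcases hxq with hx | rfl
        · exact hx
        · exact absurd rfl hxv

end Aux2

/-- A vertex-colored block graph is rainbow vertex connected if and only if it is strongly
rainbow vertex connected. -/
theorem stmt8 {V C : Type} [Fintype V] (G : SimpleGraph V) (hG : IsBlockGraph G)
    (ψ : V → C) :
    RainbowVertexConnected G ψ ↔ StrongRainbowVertexConnected G ψ := by
  constructor
  · intro hRVC u v huv
    obtain ⟨p, hp, hrb⟩ := hRVC u v huv
    obtain ⟨q, hq, hlen, hsub⟩ := Aux.exists_geodesic_subset hG p hp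
    refine ⟨q, hq, hlen, ?_⟩
    have hndq : (internalVerts q).Nodup := Aux2.internal_nodup hq
    have hinj := List.inj_on_of_nodup_map hrb
    refine List.Nodup.map_on ?_ hndq
    intro x hx y hy he
    have hx' := (Aux2.mem_internalVerts hq).mp hx
    have hy' := (Aux2.mem_internalVerts hq).mp hy
    exact hinj ((Aux2.mem_internalVerts hp).mpr ⟨hsub _ hx'.1, hx'.2⟩)
      ((Aux2.mem_internalVerts hp).mpr ⟨hsub _ hy'.1, hy'.2⟩) he
  · intro hS u v huv
    obtain ⟨p, h1, _, h3⟩ := hS u v huv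
    exact ⟨p, h1, h3⟩
end

section
/- Let G be a cactus graph with vertex coloring ψ, let s and t be vertices of G, and let G' be the subgraph of G induced on the vertex set W = {w ∈ V(G) : d_G(s,w) + d_G(w,t) = d_G(s,t)}, with the coloring ψ restricted to W. Then there is a vertex rainbow shortest s–t path in G if and only if there is a vertex rainbow s–t path in G'. -/
open SimpleGraph

/-- Every edge of `G` lies in at most one cycle: any two cycles sharing an edge have the
same edge set (i.e. they are the same cycle up to rotation and reversal). -/
def EveryEdgeInAtMostOneCycle {V : Type} (G : SimpleGraph V) : Prop :=
  ∀ (u v : V) (c : G.Walk u u) (c' : G.Walk v v), c.IsCycle → c'.IsCycle →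
    ∀ e, e ∈ c.edges → e ∈ c'.edges → ∀ f, (f ∈ c.edges ↔ f ∈ c'.edges)

/-- A cactus graph: a connected graph in which every edge lies in at most one cycle. -/
def IsCactus {V : Type} (G : SimpleGraph V) : Prop :=
  G.Connected ∧ EveryEdgeInAtMostOneCycle G

section CactusAux

open SimpleGraph

variable {V : Type} [DecidableEq V] {G : SimpleGraph V}

/-- On a shortest walk, every support vertex realizes the distance. -/
lemma mem_support_dist (hconn : G.Connected) {x y z : V} (p : G.Walk x y)
    (hl : p.length = G.dist x y) (hz : z ∈ p.support) :
    G.dist x z + G.dist z y = G.dist x y := by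
  have h1 : G.dist x z ≤ (p.takeUntil z hz).length := dist_le _
  have h2 : G.dist z y ≤ (p.dropUntil z hz).length := dist_le _
  have h3 : (p.takeUntil z hz).length + (p.dropUntil z hz).length = p.length := by
    rw [← Walk.length_append, p.take_spec hz]
  have h4 := hconn.dist_triangle (u := x) (v := z) (w := y)
  omega

/-- Claim A: in a cactus, two adjacent vertices on geodesics between `s` and `t`
cannot be at the same distance from `s`. -/
lemma cactus_no_level_edge (hconn : G.Connected) (hcac : EveryEdgeInAtMostOneCycle G)
    {s t x y : V} (hadj : G.Adj x y)
    (hx : G.dist s x + G.dist x t = G.dist s t)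
    (hy : G.dist s y + G.dist y t = G.dist s t)
    (hxy : G.dist s x = G.dist s y) : False := by
  obtain ⟨Pu, hPu⟩ := hconn.exists_walk_length_eq_dist s x
  obtain ⟨Pv, hPv⟩ := hconn.exists_walk_length_eq_dist s y
  obtain ⟨Qu, hQu⟩ := hconn.exists_walk_length_eq_dist x t
  obtain ⟨Qv, hQv⟩ := hconn.exists_walk_length_eq_dist y t
  have hyt : G.dist y t = G.dist x t := by omega
  have hyPu : y ∉ Pu.support := by
    intro h
    have := mem_support_dist hconn Pu hPu h
    have h0 : G.dist y x = 0 := by omega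
    exact hadj.ne (hconn.dist_eq_zero_iff.mp h0).symm
  have hxPv : x ∉ Pv.support := by
    intro h
    have := mem_support_dist hconn Pv hPv h
    have h0 : G.dist x y = 0 := by omega
    exact hadj.ne (hconn.dist_eq_zero_iff.mp h0)
  have hyQu : y ∉ Qu.support := by
    intro h
    have := mem_support_dist hconn Qu hQu h
    have h0 : G.dist x y = 0 := by omega
    exact hadj.ne (hconn.dist_eq_zero_iff.mp h0)
  have hxQv : x ∉ Qv.support := by
    intro h
    have := mem_support_dist hconn Qv hQv h
    have h0 : G.dist y x = 0 := by omega
    exact hadj.ne (hconn.dist_eq_zero_iff.mp h0).symm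
  obtain ⟨R1, hR1p, hR1e, hR1s⟩ :
      ∃ R : G.Walk x y, R.IsPath ∧ (∀ e ∈ R.edges, e ∈ Pu.edges ∨ e ∈ Pv.edges) ∧
        (∀ z ∈ R.support, z ∈ Pu.support ∨ z ∈ Pv.support) :=
    ⟨(Pu.reverse.append Pv).bypass, Walk.bypass_isPath _,
      fun e he => by
        have h := Walk.edges_bypass_subset _ he
        rwa [Walk.edges_append, List.mem_append, Walk.edges_reverse, List.mem_reverse] at h,
      fun z hz => by
        have h := Walk.support_bypass_subset _ hz
        rwa [Walk.mem_support_append_iff, Walk.support_reverse, List.mem_reverse] at h⟩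
  have hne1 : s(y, x) ∉ R1.edges := by
    intro h
    rcases hR1e _ h with h' | h'
    · exact hyPu (Walk.fst_mem_support_of_mem_edges Pu h')
    · exact hxPv (Walk.snd_mem_support_of_mem_edges Pv h')
  have hC1 : (Walk.cons hadj.symm R1).IsCycle :=
    (Walk.cons_isCycle_iff R1 hadj.symm).mpr ⟨hR1p, hne1⟩
  obtain ⟨R2, hR2p, hR2e⟩ :
      ∃ R : G.Walk x y, R.IsPath ∧ (∀ e ∈ R.edges, e ∈ Qu.edges ∨ e ∈ Qv.edges) :=
    ⟨(Qu.append Qv.reverse).bypass, Walk.bypass_isPath _,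
      fun e he => by
        have h := Walk.edges_bypass_subset _ he
        rwa [Walk.edges_append, List.mem_append, Walk.edges_reverse, List.mem_reverse] at h⟩
  have hne2 : s(y, x) ∉ R2.edges := by
    intro h
    rcases hR2e _ h with h' | h'
    · exact hyQu (Walk.fst_mem_support_of_mem_edges Qu h')
    · exact hxQv (Walk.snd_mem_support_of_mem_edges Qv h')
  have hC2 : (Walk.cons hadj.symm R2).IsCycle :=
    (Walk.cons_isCycle_iff R2 hadj.symm).mpr ⟨hR2p, hne2⟩
  have key := hcac y y _ _ hC1 hC2 (s(y, x))
    (by rw [Walk.edges_cons]; exact List.mem_cons_self)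
    (by rw [Walk.edges_cons]; exact List.mem_cons_self)
  cases R1 with
  | nil => exact hadj.ne rfl
  | cons h' r =>
    rename_i y1
    have hy1y : y1 ≠ y := by
      rintro rfl
      apply hne1
      rw [Sym2.eq_swap, Walk.edges_cons]
      exact List.mem_cons_self
    have he1 : s(x, y1) ∈ (Walk.cons hadj.symm (Walk.cons h' r)).edges := by
      rw [Walk.edges_cons, Walk.edges_cons]
      exact List.mem_cons_of_mem _ (List.mem_cons_self)
    have h2 := (key (s(x, y1))).mp he1
    rw [Walk.edges_cons, List.mem_cons] at h2
    rcases h2 with h2 | h2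
    · rw [Sym2.eq_iff] at h2
      rcases h2 with ⟨h21, -⟩ | ⟨-, h22⟩
      · exact hadj.ne h21
      · exact hy1y h22
    · rcases hR2e _ h2 with h3 | h3
      · have hy1Qu : y1 ∈ Qu.support := Walk.snd_mem_support_of_mem_edges Qu h3
        have hd1 := mem_support_dist hconn Qu hQu hy1Qu
        have hy1R : y1 ∈ (Walk.cons h' r).support := by
          rw [Walk.support_cons]
          exact List.mem_cons_of_mem _ r.start_mem_support
        have hd2 : G.dist s y1 ≤ G.dist s x := by
          rcases hR1s _ hy1R with h4 | h4
          · have := mem_support_dist hconn Pu hPu h4; omega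
          · have := mem_support_dist hconn Pv hPv h4; omega
        have hne0 : G.dist x y1 ≠ 0 := fun h0 => h'.ne (hconn.dist_eq_zero_iff.mp h0)
        have htri := hconn.dist_triangle (u := s) (v := y1) (w := t)
        omega
      · exact hxQv (Walk.fst_mem_support_of_mem_edges Qv h3)

/-- Claim B: in a cactus, a "peak" `u – m – v` on geodesics between `s` and `t` followed
by a continuation from `v` to `t` avoiding `m` is impossible. -/
lemma cactus_no_peak (hconn : G.Connected) (hcac : EveryEdgeInAtMostOneCycle G)
    {s t u m v : V} (hum : G.Adj u m) (hmv : G.Adj m v) (huv : u ≠ v)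
    (hWu : G.dist s u + G.dist u t = G.dist s t)
    (hWv : G.dist s v + G.dist v t = G.dist s t)
    (hWm : G.dist s m + G.dist m t = G.dist s t)
    (hfu : G.dist s m = G.dist s u + 1)
    (hfv : G.dist s m = G.dist s v + 1)
    (q' : G.Walk v t) (hmq' : m ∉ q'.support) : False := by
  obtain ⟨Pu, hPu⟩ := hconn.exists_walk_length_eq_dist s u
  obtain ⟨Pv, hPv⟩ := hconn.exists_walk_length_eq_dist s v
  obtain ⟨Qm, hQm⟩ := hconn.exists_walk_length_eq_dist m t
  have hut : G.dist u t = G.dist m t + 1 := by omega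
  have hvt : G.dist v t = G.dist m t + 1 := by omega
  have hmPu : m ∉ Pu.support := fun h => by
    have := mem_support_dist hconn Pu hPu h; omega
  have hmPv : m ∉ Pv.support := fun h => by
    have := mem_support_dist hconn Pv hPv h; omega
  have huQm : u ∉ Qm.support := fun h => by
    have := mem_support_dist hconn Qm hQm h; omega
  have hvQm : v ∉ Qm.support := fun h => by
    have := mem_support_dist hconn Qm hQm h; omega
  obtain ⟨R1, hR1p, hR1s⟩ :
      ∃ R : G.Walk u v, R.IsPath ∧ (∀ z ∈ R.support, z ∈ Pu.support ∨ z ∈ Pv.support) :=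
    ⟨(Pu.reverse.append Pv).bypass, Walk.bypass_isPath _,
      fun z hz => by
        have h := Walk.support_bypass_subset _ hz
        rwa [Walk.mem_support_append_iff, Walk.support_reverse, List.mem_reverse] at h⟩
  have hmR1 : m ∉ R1.support := fun h => (hR1s _ h).elim hmPu hmPv
  have hinner : (Walk.cons hum.symm R1).IsPath :=
    (Walk.cons_isPath_iff _ _).mpr ⟨hR1p, hmR1⟩
  have hne1 : s(v, m) ∉ (Walk.cons hum.symm R1).edges := by
    rw [Walk.edges_cons, List.mem_cons]
    rintro (h | h)
    · rw [Sym2.eq_iff] at h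
      rcases h with ⟨h1, -⟩ | ⟨h1, -⟩
      · exact hmv.ne h1.symm
      · exact huv h1.symm
    · exact hmR1 (Walk.snd_mem_support_of_mem_edges R1 h)
  have hC1 : (Walk.cons hmv.symm (Walk.cons hum.symm R1)).IsCycle :=
    (Walk.cons_isCycle_iff _ hmv.symm).mpr ⟨hinner, hne1⟩
  obtain ⟨R3, hR3p, hR3e⟩ :
      ∃ R : G.Walk v m, R.IsPath ∧ (∀ e ∈ R.edges, e ∈ q'.edges ∨ e ∈ Qm.edges) :=
    ⟨(q'.append Qm.reverse).bypass, Walk.bypass_isPath _,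
      fun e he => by
        have h := Walk.edges_bypass_subset _ he
        rwa [Walk.edges_append, List.mem_append, Walk.edges_reverse, List.mem_reverse] at h⟩
  have hne3 : s(m, v) ∉ R3.edges := by
    intro h
    rcases hR3e _ h with h' | h'
    · exact hmq' (Walk.fst_mem_support_of_mem_edges q' h')
    · exact hvQm (Walk.snd_mem_support_of_mem_edges Qm h')
  have hC3 : (Walk.cons hmv R3).IsCycle :=
    (Walk.cons_isCycle_iff _ hmv).mpr ⟨hR3p, hne3⟩
  have key := hcac v m _ _ hC1 hC3 (s(m, v))
    (by rw [Walk.edges_cons]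
        exact List.mem_cons.mpr (Or.inl Sym2.eq_swap))
    (by rw [Walk.edges_cons]; exact List.mem_cons_self)
  have hmem : s(m, u) ∈ (Walk.cons hmv.symm (Walk.cons hum.symm R1)).edges := by
    rw [Walk.edges_cons, Walk.edges_cons]
    exact List.mem_cons_of_mem _ (List.mem_cons_self)
  have h2 := (key _).mp hmem
  rw [Walk.edges_cons, List.mem_cons] at h2
  rcases h2 with h2 | h2
  · rw [Sym2.eq_iff] at h2
    rcases h2 with ⟨-, h3⟩ | ⟨h3, -⟩
    · exact huv h3
    · exact hmv.ne h3
  · rcases hR3e _ h2 with h3 | h3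
    · exact hmq' (Walk.fst_mem_support_of_mem_edges q' h3)
    · exact huQm (Walk.snd_mem_support_of_mem_edges Qm h3)

/-- Key geodesic lemma: in a cactus, any path towards `t` all of whose vertices lie on
geodesics between `s` and `t`, and which starts at `s` (or arrives "from below"), is a
shortest path. -/
lemma cactus_geodesic (hconn : G.Connected) (hcac : EveryEdgeInAtMostOneCycle G) (s : V) :
    ∀ {x t : V} (q : G.Walk x t), q.IsPath →
      (∀ y ∈ q.support, G.dist s y + G.dist y t = G.dist s t) →
      (x = s ∨ ∃ u, G.Adj u x ∧ G.dist s u + 1 = G.dist s x ∧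
        G.dist s u + G.dist u t = G.dist s t ∧ u ∉ q.support) →
      q.length = G.dist x t := by
  intro x t q
  induction q with
  | nil =>
    intro _ _ _
    simp [SimpleGraph.dist_self]
  | cons hadj q' ih =>
    rename_i x y t
    intro hpath hsupp hist
    have hq'path : q'.IsPath := hpath.of_cons
    have hxq' : x ∉ q'.support := ((Walk.cons_isPath_iff hadj q').mp hpath).2
    have hx := hsupp x (Walk.start_mem_support _)
    have hy : G.dist s y + G.dist y t = G.dist s t := by
      apply hsupp
      rw [Walk.support_cons]
      exact List.mem_cons_of_mem _ q'.start_mem_support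
    have hd1 : G.dist x y ≤ 1 := by
      have := dist_le (Walk.cons hadj Walk.nil)
      simpa using this
    have hstep1 : G.dist s y ≤ G.dist s x + 1 := by
      have := hconn.dist_triangle (u := s) (v := x) (w := y)
      omega
    have hstep2 : G.dist s x ≤ G.dist s y + 1 := by
      have h1 : G.dist y x ≤ 1 := by rwa [dist_comm] at hd1
      have := hconn.dist_triangle (u := s) (v := y) (w := x)
      omega
    rcases Nat.lt_trichotomy (G.dist s x) (G.dist s y) with h | h | h
    · have hsy : G.dist s y = G.dist s x + 1 := by omega
      have hlen : q'.length = G.dist y t := by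
        apply ih hq'path
        · intro z hz
          exact hsupp z (by rw [Walk.support_cons]; exact List.mem_cons_of_mem _ hz)
        · exact Or.inr ⟨x, hadj, by omega, hx, hxq'⟩
      rw [Walk.length_cons, hlen]
      omega
    · exact (cactus_no_level_edge hconn hcac hadj hx hy h).elim
    · rcases hist with rfl | ⟨u, huadj, huf, huW, hunot⟩
      · have h0 : G.dist x x = 0 := SimpleGraph.dist_self
        omega
      · have huy : u ≠ y := by
          rintro rfl
          apply hunot
          rw [Walk.support_cons]
          exact List.mem_cons_of_mem _ q'.start_mem_support
        have hdx : G.dist s x = G.dist s y + 1 := by omega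
        exact (cactus_no_peak hconn hcac huadj hadj huy huW hy hx huf.symm hdx q' hxq').elim

/-- The inclusion homomorphism from an induced subgraph. -/
def WHom (G : SimpleGraph V) (W : Set V) : G.induce W →g G :=
  ⟨Subtype.val, fun {a b} h => h⟩

lemma lift_walk {W : Set V} {a b : V} (p : G.Walk a b) (hp : ∀ x ∈ p.support, x ∈ W) :
    ∃ (ha : a ∈ W) (hb : b ∈ W) (q : (G.induce W).Walk ⟨a, ha⟩ ⟨b, hb⟩),
      q.map (WHom G W) = p := by
  induction p with
  | nil =>
    exact ⟨hp _ (Walk.start_mem_support _), hp _ (Walk.start_mem_support _), Walk.nil, rfl⟩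
  | cons h p' ih =>
    obtain ⟨ha', hb', q', hq'⟩ :=
      ih (fun x hx => hp x (by rw [Walk.support_cons]; exact List.mem_cons_of_mem _ hx))
    have ha : _ ∈ W := hp _ (Walk.start_mem_support _)
    exact ⟨ha, hb', Walk.cons (by exact h) q', by subst hq'; rfl⟩

lemma internalVerts_map {V' : Type} {G' : SimpleGraph V'} (f : G →g G') {a b : V}
    (p : G.Walk a b) : internalVerts (p.map f) = (internalVerts p).map f := by
  unfold internalVerts
  rw [Walk.support_map]
  simp

end CactusAux

/-- For a vertex-colored cactus graph `G` and vertices `s`, `t`, letting `G'` be the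
subgraph induced on `W = {w | d(s,w) + d(w,t) = d(s,t)}`, there is a vertex rainbow
shortest `s`–`t` path in `G` iff there is a vertex rainbow `s`–`t` path in `G'`. -/
theorem stmt10 {V C : Type} [Fintype V] (G : SimpleGraph V) (hG : IsCactus G)
    (ψ : V → C) (s t : V) (W : Set V)
    (hW : W = {w : V | G.dist s w + G.dist w t = G.dist s t})
    (hs : s ∈ W) (ht : t ∈ W) :
    (∃ p : G.Walk s t, p.IsPath ∧ p.length = G.dist s t ∧ IsVertexRainbow ψ p) ↔
      (∃ q : (G.induce W).Walk ⟨s, hs⟩ ⟨t, ht⟩,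
        q.IsPath ∧ IsVertexRainbow (fun x => ψ x.1) q) := by
  classical

  obtain ⟨hconn, hcac⟩ := hG
  constructor
  · rintro ⟨p, hpath, hlen, hrb⟩
    have hsupp : ∀ x ∈ p.support, x ∈ W := by
      intro x hx
      rw [hW]
      exact mem_support_dist hconn p hlen hx
    obtain ⟨ha, hb, q, hq⟩ := lift_walk p hsupp
    refine ⟨q, ?_, ?_⟩
    · apply Walk.IsPath.of_map (f := WHom G W)
      rw [hq]; exact hpath
    · unfold IsVertexRainbow at hrb ⊢
      have hiv : internalVerts p = (internalVerts q).map (WHom G W) := by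
        rw [← hq]; exact internalVerts_map (WHom G W) q
      rw [hiv, List.map_map] at hrb
      exact hrb
  · rintro ⟨q, hqpath, hqrb⟩
    have hppath : (q.map (WHom G W)).IsPath :=
      Walk.map_isPath_of_injective (fun a b hab => Subtype.ext hab) hqpath
    refine ⟨q.map (WHom G W), hppath, ?_, ?_⟩
    · apply cactus_geodesic hconn hcac s (q.map (WHom G W)) hppath ?_ (Or.inl rfl)
      intro y hy
      rw [Walk.support_map, List.mem_map] at hy
      obtain ⟨z, hz, rfl⟩ := hy
      have hzW : (z : V) ∈ {w : V | G.dist s w + G.dist w t = G.dist s t} := by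
        rw [← hW]; exact z.2
      exact hzW
    · unfold IsVertexRainbow at hqrb ⊢
      have hiv : internalVerts (G := G) (u := s) (v := t) (q.map (WHom G W)) =
          (internalVerts q).map (WHom G W) := internalVerts_map (WHom G W) q
      rw [hiv, List.map_map]
      exact hqrb
end

section
/- Let G be a cactus graph, let s and t be vertices of G, and let G' be the subgraph of G induced on the vertex set W = {w ∈ V(G) : d_G(s,w) + d_G(w,t) = d_G(s,t)}. Then every s–t path in G' has length exactly d_G(s,t); that is, every s–t path in G' is a shortest s–t path in G. -/
open SimpleGraph

namespace StmtAux

variable {V : Type} {G : SimpleGraph V}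

lemma dist_start_getVert (hc : G.Connected) {u v : V} (p : G.Walk u v) (i : ℕ) :
    G.dist u (p.getVert i) ≤ i := by
  induction p generalizing i with
  | nil => simp [Walk.getVert, SimpleGraph.dist_self]
  | @cons a b c h q ih =>
    cases i with
    | zero => simp [Walk.getVert_zero]
    | succ n =>
      rw [Walk.getVert_cons_succ]
      have h1 : G.dist a (q.getVert n) ≤ G.dist a b + G.dist b (q.getVert n) :=
        hc.dist_triangle
      have h2 : G.dist a b = 1 := SimpleGraph.dist_eq_one_iff_adj.mpr h
      have h3 := ih n
      omega

lemma dist_getVert_end (hc : G.Connected) {u v : V} (p : G.Walk u v) (i : ℕ) :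
    G.dist (p.getVert i) v ≤ p.length - i := by
  induction p generalizing i with
  | nil => simp [Walk.getVert, SimpleGraph.dist_self]
  | @cons a b c h q ih =>
    cases i with
    | zero =>
      rw [Walk.getVert_zero]
      have h1 : G.dist a c ≤ G.dist a b + G.dist b c := hc.dist_triangle
      have h2 : G.dist a b = 1 := SimpleGraph.dist_eq_one_iff_adj.mpr h
      have h3 : G.dist b c ≤ q.length := SimpleGraph.dist_le q
      simp only [Walk.length_cons]
      omega
    | succ n =>
      rw [Walk.getVert_cons_succ]
      have := ih n
      simp only [Walk.length_cons]
      omega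

lemma geodesic_level (hc : G.Connected) {u v : V} {p : G.Walk u v}
    (hlen : p.length = G.dist u v) {i : ℕ} (hi : i ≤ p.length) :
    G.dist u (p.getVert i) = i := by
  have h1 := dist_start_getVert hc p i
  have h2 := dist_getVert_end hc p i
  have h3 : G.dist u v ≤ G.dist u (p.getVert i) + G.dist (p.getVert i) v :=
    hc.dist_triangle
  omega

lemma path_getVert_ne {u v : V} {p : G.Walk u v} (hp : p.IsPath) :
    ∀ {i k : ℕ}, i < k → k ≤ p.length → p.getVert i ≠ p.getVert k := by
  induction p with
  | nil => intro i k hik hk; simp at hk; omega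
  | @cons a b c h q ih =>
    intro i k hik hk
    cases i with
    | zero =>
      cases k with
      | zero => omega
      | succ n =>
        rw [Walk.getVert_zero, Walk.getVert_cons_succ]
        intro heq
        have hmem : a ∈ q.support := by
          rw [Walk.mem_support_iff_exists_getVert]
          exact ⟨n, heq.symm, by simpa [Walk.length_cons] using hk⟩
        exact ((Walk.cons_isPath_iff _ _).mp hp).2 hmem
    | succ i' =>
      cases k with
      | zero => omega
      | succ k' =>
        rw [Walk.getVert_cons_succ, Walk.getVert_cons_succ]
        exact ih hp.of_cons (by omega) (by simpa [Walk.length_cons] using hk)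

lemma exists_tail_path {b : V} :
    ∀ {a : V} (p : G.Walk a b), p.IsPath → ∀ i, 1 ≤ i → i ≤ p.length →
    ∃ r : G.Walk (p.getVert i) b, r.IsPath ∧ p.getVert (i - 1) ∉ r.support := by
  intro a p
  induction p with
  | nil => intro _ i h1 h2; simp at h2; omega
  | @cons a c b h q ih =>
    intro hp i h1 h2
    match i, h1 with
    | 1, _ =>
      refine ⟨q.copy (q.getVert_zero).symm rfl, ?_, ?_⟩
      · simpa using hp.of_cons
      · simpa using ((Walk.cons_isPath_iff _ _).mp hp).2
    | (n+2), _ =>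
      obtain ⟨r, hr1, hr2⟩ := ih hp.of_cons (n+1) (by omega)
        (by simpa [Walk.length_cons] using h2)
      refine ⟨r, hr1, ?_⟩
      simpa using hr2


lemma walk_find {s₀ : V} (L : List V) :
    ∀ {a : V} (R : G.Walk a s₀), R.IsPath → s₀ ∈ L →
      ∃ (z : V) (D : G.Walk a z), D.IsPath ∧ z ∈ L ∧
        (∀ v ∈ D.support, v ∈ R.support) ∧ (∀ v ∈ D.support, v ∈ L → v = z) := by
  intro a R
  induction R with
  | nil =>
    intro _ hsL
    refine ⟨_, Walk.nil, Walk.IsPath.nil, hsL, by simp, ?_⟩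
    intro v hv _
    simpa using hv
  | @cons a b c h R' ih =>
    intro hR hsL
    by_cases haL : a ∈ L
    · refine ⟨a, Walk.nil, Walk.IsPath.nil, haL, by simp, ?_⟩
      intro v hv _
      simpa using hv
    · obtain ⟨z, D, hD, hzL, hDsub, hmin⟩ := ih hR.of_cons hsL
      refine ⟨z, Walk.cons h D, ?_, hzL, ?_, ?_⟩
      · rw [Walk.cons_isPath_iff]
        exact ⟨hD, fun haD => ((Walk.cons_isPath_iff _ _).mp hR).2 (hDsub _ haD)⟩
      · intro v hv
        rw [Walk.support_cons] at hv ⊢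
        rcases List.mem_cons.mp hv with hv | hv
        · exact List.mem_cons.mpr (Or.inl hv)
        · exact List.mem_cons.mpr (Or.inr (hDsub _ hv))
      · intro v hv hvL
        rw [Walk.support_cons] at hv
        rcases List.mem_cons.mp hv with rfl | hv
        · exact absurd hvL haL
        · exact hmin _ hv hvL

lemma takeUntil_cons_ne [DecidableEq V] {v x w u : V} (r : G.Adj v x) (p : G.Walk x w)
    (h : u ∈ (Walk.cons r p).support) (hne : v ≠ u) :
    ∃ (h' : u ∈ p.support), (Walk.cons r p).takeUntil u h = Walk.cons r (p.takeUntil u h') := by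
  have h2 : u ∈ p.support := by
    rw [Walk.support_cons] at h
    rcases List.mem_cons.mp h with h3 | h3
    · exact absurd h3.symm hne
    · exact h3
  refine ⟨h2, ?_⟩
  rw [Walk.takeUntil.eq_def]
  simp [hne]

lemma two_paths_cycle [DecidableEq V] {w s₀ q1 p1 : V} (hq : G.Adj w q1) (hp : G.Adj w p1)
    (Q' : G.Walk q1 s₀) (P' : G.Walk p1 s₀)
    (hQ : (Walk.cons hq Q').IsPath) (hP : (Walk.cons hp P').IsPath) (hne : q1 ≠ p1) :
    ∃ c : G.Walk w w, c.IsCycle ∧ s(w, q1) ∈ c.edges ∧ s(w, p1) ∈ c.edges ∧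
      ∀ v ∈ c.support, v ∈ (Walk.cons hq Q').support ∨ v ∈ (Walk.cons hp P').support := by
  obtain ⟨z, D, hD, hzL, hDsub, hmin⟩ :=
    walk_find ((Walk.cons hp P').support) Q' hQ.of_cons (Walk.end_mem_support _)
  have hwQ' : w ∉ Q'.support := ((Walk.cons_isPath_iff _ _).mp hQ).2
  have hwP' : w ∉ P'.support := ((Walk.cons_isPath_iff _ _).mp hP).2
  have hzQ' : z ∈ Q'.support := hDsub z (Walk.end_mem_support D)
  have hzw : w ≠ z := fun hzw => hwQ' (hzw ▸ hzQ')
  obtain ⟨hzP', hEeq⟩ := takeUntil_cons_ne hp P' hzL hzw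
  set E := (Walk.cons hp P').takeUntil z hzL with hEdef
  have hE : E.IsPath := hP.takeUntil hzL
  have hEsub : ∀ v ∈ E.support, v ∈ (Walk.cons hp P').support :=
    fun v hv => Walk.support_takeUntil_subset _ hzL hv
  have hErev : E.reverse.IsPath := hE.reverse
  have hztail : z ∉ E.reverse.support.tail := by
    have hnd := hErev.support_nodup
    rw [Walk.support_eq_cons E.reverse] at hnd
    exact (List.nodup_cons.mp hnd).1
  have happ : (D.append E.reverse).IsPath := by
    rw [Walk.isPath_def, Walk.support_append, List.nodup_append]
    refine ⟨hD.support_nodup, ?_, ?_⟩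
    · have hnd := hErev.support_nodup
      rw [Walk.support_eq_cons E.reverse] at hnd
      exact hnd.of_cons
    · intro v hvD v' hvtail hvv'
      subst hvv'
      have hvE : v ∈ E.support := by
        have : v ∈ E.reverse.support := List.mem_of_mem_tail hvtail
        rwa [Walk.support_reverse, List.mem_reverse] at this
      have hvz : v = z := hmin v hvD (hEsub v hvE)
      exact hztail (hvz ▸ hvtail)
  have hedge_notmem : s(w, q1) ∉ (D.append E.reverse).edges := by
    intro hmem
    rw [Walk.edges_append, List.mem_append] at hmem
    rcases hmem with hm | hm
    · exact hwQ' (hDsub w (Walk.fst_mem_support_of_mem_edges D hm))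
    · rw [Walk.edges_reverse, List.mem_reverse] at hm
      rw [hEeq, Walk.edges_cons] at hm
      rcases List.mem_cons.mp hm with hm | hm
      · exact hne (Sym2.congr_right.mp hm)
      · exact hwP' (Walk.fst_mem_support_of_mem_edges _ (Walk.edges_takeUntil_subset P' hzP' hm))
  refine ⟨Walk.cons hq (D.append E.reverse), ?_, ?_, ?_, ?_⟩
  · exact (Walk.cons_isCycle_iff _ _).mpr ⟨happ, hedge_notmem⟩
  · rw [Walk.edges_cons]; exact List.mem_cons_self
  · rw [Walk.edges_cons]
    refine List.mem_cons.mpr (Or.inr ?_)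
    rw [Walk.edges_append, List.mem_append]
    refine Or.inr ?_
    rw [Walk.edges_reverse, List.mem_reverse, hEeq, Walk.edges_cons]
    exact List.mem_cons_self
  · intro v hv
    rw [Walk.support_cons] at hv
    rcases List.mem_cons.mp hv with rfl | hv
    · exact Or.inl (Walk.start_mem_support _)
    · rw [Walk.mem_support_append_iff] at hv
      rcases hv with hv | hv
      · exact Or.inl (by rw [Walk.support_cons]; exact List.mem_cons.mpr (Or.inr (hDsub _ hv)))
      · have : v ∈ E.support := by rwa [Walk.support_reverse, List.mem_reverse] at hv
        exact Or.inr (hEsub _ this)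

end StmtAux

open StmtAux in
/-- For a cactus graph `G` and vertices `s`, `t`, every `s`–`t` path in the subgraph
induced on `W = {w | d(s,w) + d(w,t) = d(s,t)}` has length exactly `d_G(s,t)`, i.e. it is
a shortest `s`–`t` path of `G`. -/
theorem stmt11 {V : Type} [Fintype V] (G : SimpleGraph V) (hG : IsCactus G)
    (s t : V) (W : Set V)
    (hW : W = {w : V | G.dist s w + G.dist w t = G.dist s t})
    (hs : s ∈ W) (ht : t ∈ W) :
    ∀ q : (G.induce W).Walk ⟨s, hs⟩ ⟨t, ht⟩, q.IsPath → q.length = G.dist s t := by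
  classical
  obtain ⟨hconn, hcac⟩ := hG
  intro q hq
  let φ : G.induce W →g G := ⟨Subtype.val, fun {a b} h => h⟩
  let p : G.Walk s t := q.map φ
  have hp : p.IsPath := Walk.map_isPath_of_injective Subtype.val_injective hq
  have hplen : p.length = q.length := Walk.length_map _ _
  have hWsup : ∀ v ∈ p.support, G.dist s v + G.dist v t = G.dist s t := by
    intro v hv
    rw [show p = q.map φ from rfl, Walk.support_map] at hv
    obtain ⟨a, _, rfl⟩ := List.mem_map.mp hv
    have haW : (φ a : V) ∈ {w : V | G.dist s w + G.dist w t = G.dist s t} := by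
      rw [← hW]; exact a.2
    exact haW
  have hWd : ∀ i, i ≤ p.length → G.dist s (p.getVert i) + G.dist (p.getVert i) t = G.dist s t :=
    fun i hi => hWsup _ (Walk.mem_support_iff_exists_getVert.mpr ⟨i, rfl, hi⟩)
  have key : ∀ i, i ≤ p.length → G.dist s (p.getVert i) = i := by
    intro i
    induction i using Nat.strong_induction_on with
    | _ i ih =>
    intro hi
    match i, hi with
    | 0, _ => simp [SimpleGraph.dist_self]
    | (n+1), hi =>
      have hn : G.dist s (p.getVert n) = n := ih n (by omega) (by omega)
      have hadj : G.Adj (p.getVert n) (p.getVert (n+1)) := p.adj_getVert_succ (by omega)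
      have hup : G.dist s (p.getVert (n+1)) ≤ n + 1 := by
        have h1 : G.dist s (p.getVert (n+1)) ≤ G.dist s (p.getVert n) +
            G.dist (p.getVert n) (p.getVert (n+1)) := hconn.dist_triangle
        have h2 : G.dist (p.getVert n) (p.getVert (n+1)) = 1 :=
          SimpleGraph.dist_eq_one_iff_adj.mpr hadj
        omega
      have hlow : n ≤ G.dist s (p.getVert (n+1)) + 1 := by
        have h1 : G.dist s (p.getVert n) ≤ G.dist s (p.getVert (n+1)) +
            G.dist (p.getVert (n+1)) (p.getVert n) := hconn.dist_triangle
        have h2 : G.dist (p.getVert (n+1)) (p.getVert n) = 1 :=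
          SimpleGraph.dist_eq_one_iff_adj.mpr hadj.symm
        omega
      by_contra hne'
      have hcase : G.dist s (p.getVert (n+1)) = n ∨ (∃ m, n = m + 1 ∧ G.dist s (p.getVert (n+1)) = m) := by
        rcases Nat.eq_or_lt_of_le hup with h | h
        · exact absurd h hne'
        · rcases Nat.eq_zero_or_pos n with rfl | hpos
          · left; omega
          · rcases Nat.eq_or_lt_of_le (by omega : G.dist s (p.getVert (n+1)) ≤ n) with h2 | h2
            · exact Or.inl h2
            · exact Or.inr ⟨G.dist s (p.getVert (n+1)), by omega, rfl⟩
      have hWw := hWd n (by omega)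
      have hWy := hWd (n+1) hi
      rcases hcase with hflat | ⟨m, rfl, hdown⟩
      · -- FLAT case : dist s (getVert (n+1)) = n
        rcases Nat.eq_zero_or_pos n with rfl | hpos
        · -- n = 0 : getVert 1 = s
          have h0 : s = p.getVert 1 := (hconn.dist_eq_zero_iff).mp hflat
          have h1 := path_getVert_ne hp (show 0 < 1 by omega) (show 1 ≤ p.length by omega)
          rw [Walk.getVert_zero] at h1
          exact h1 h0
        obtain ⟨m, rfl⟩ : ∃ m, n = m + 1 := ⟨n - 1, by omega⟩
        have hflat2 : G.dist s (p.getVert (m+2)) = m+1 := hflat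
        have hWy2 : G.dist s (p.getVert (m+2)) + G.dist (p.getVert (m+2)) t = G.dist s t := hWy
        have hi2 : m + 2 ≤ p.length := hi
        have hadj2 : G.Adj (p.getVert (m+1)) (p.getVert (m+2)) := hadj
        -- notation: w = getVert (m+1) (level m+1), w' = getVert (m+2) (level m+1), x = getVert m (level m)
        have hx : G.dist s (p.getVert m) = m := ih m (by omega) (by omega)
        have hadj_xw : G.Adj (p.getVert m) (p.getVert (m+1)) := p.adj_getVert_succ (by omega)
        obtain ⟨gx, hgx, hgxlen⟩ := hconn.exists_path_of_dist s (p.getVert m)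
        obtain ⟨gw', hgw', hgw'len⟩ := hconn.exists_path_of_dist s (p.getVert (m+2))
        have hwgx : p.getVert (m+1) ∉ gx.support := by
          intro hmem
          obtain ⟨r, hr, hrle⟩ := Walk.mem_support_iff_exists_getVert.mp hmem
          have h1 := dist_start_getVert hconn gx r
          rw [hr] at h1
          omega
        have hwgw' : p.getVert (m+1) ∉ gw'.support := by
          intro hmem
          obtain ⟨r, hr, hrle⟩ := Walk.mem_support_iff_exists_getVert.mp hmem
          have h1 := geodesic_level hconn hgw'len hrle
          rw [hr] at h1
          have hrl : r = gw'.length := by omega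
          rw [hrl, Walk.getVert_length] at hr
          exact hadj.ne (hr.symm)
        have hQ1 : (Walk.cons hadj gw'.reverse).IsPath := by
          rw [Walk.cons_isPath_iff]
          refine ⟨hgw'.reverse, ?_⟩
          rw [Walk.support_reverse, List.mem_reverse]
          exact hwgw'
        have hP1 : (Walk.cons hadj_xw.symm gx.reverse).IsPath := by
          rw [Walk.cons_isPath_iff]
          refine ⟨hgx.reverse, ?_⟩
          rw [Walk.support_reverse, List.mem_reverse]
          exact hwgx
        have hne1 : p.getVert (m+2) ≠ p.getVert m := by
          intro h; rw [h] at hflat; omega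
        obtain ⟨C, hC, hCe1, _, hCsup⟩ :=
          two_paths_cycle hadj hadj_xw.symm gw'.reverse gx.reverse hQ1 hP1 hne1
        have hClev : ∀ v ∈ C.support, G.dist s v ≤ m + 1 := by
          intro v hv
          rcases hCsup v hv with hv | hv <;> rw [Walk.support_cons] at hv <;>
            rcases List.mem_cons.mp hv with rfl | hv
          · omega
          · rw [Walk.support_reverse, List.mem_reverse] at hv
            obtain ⟨r, hr, hrle⟩ := Walk.mem_support_iff_exists_getVert.mp hv
            have h1 := dist_start_getVert hconn gw' r
            rw [hr] at h1; omega
          · omega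
          · rw [Walk.support_reverse, List.mem_reverse] at hv
            obtain ⟨r, hr, hrle⟩ := Walk.mem_support_iff_exists_getVert.mp hv
            have h1 := dist_start_getVert hconn gx r
            rw [hr] at h1; omega
        -- t-side
        have hw't : p.getVert (m+2) ≠ t := by
          intro h
          have h1 : G.dist (p.getVert (m+2)) t = 0 := by rw [h, SimpleGraph.dist_self]
          have h3 : G.dist (p.getVert (m+1)) t = 0 := by omega
          have h4 : p.getVert (m+1) = t := hconn.dist_eq_zero_iff.mp h3
          exact hadj2.ne (h4.trans h.symm)
        have hposw't : 0 < G.dist (p.getVert (m+2)) t := hconn.pos_dist_of_ne hw't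
        obtain ⟨T, hT, hTlen⟩ := hconn.exists_path_of_dist (p.getVert (m+2)) t
        have hwT : p.getVert (m+1) ∉ T.support := by
          intro hmem
          obtain ⟨r, hr, hrle⟩ := Walk.mem_support_iff_exists_getVert.mp hmem
          have h1 := dist_getVert_end hconn T r
          have h2 : G.dist s t ≤ G.dist s (T.getVert r) + G.dist (T.getVert r) t :=
            hconn.dist_triangle
          rw [hr] at h1 h2
          -- dist s w = m+1, dist s w' = m+1, dist s w' + dist w' t = dist s t, T.length = dist w' t
          have hr0 : r = 0 := by omega
          rw [hr0, Walk.getVert_zero] at hr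
          exact hadj.ne hr.symm
        obtain ⟨T2, hT2, hT2len⟩ := hconn.exists_path_of_dist (p.getVert (m+1)) t
        have hwt : p.getVert (m+1) ≠ t := by
          have h := path_getVert_ne hp (show m+1 < p.length by omega) le_rfl
          rw [Walk.getVert_length] at h
          exact h
        have hTnn : ¬ T.Nil := by
          rw [Walk.nil_iff_length_eq, hTlen]
          omega
        obtain ⟨c, hTc, Trest, rfl⟩ := Walk.not_nil_iff.mp hTnn
        have hT2nn : ¬ T2.Nil := by
          rw [Walk.nil_iff_length_eq, hT2len]
          have := hconn.pos_dist_of_ne hwt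
          omega
        obtain ⟨b, hTb, T2rest, rfl⟩ := Walk.not_nil_iff.mp hT2nn
        have hc_lev : m + 2 ≤ G.dist s b := by
          have h1 : G.dist b t ≤ T2rest.length := SimpleGraph.dist_le T2rest
          have h2 : G.dist s t ≤ G.dist s b + G.dist b t := hconn.dist_triangle
          have h3 : T2rest.length + 1 = G.dist (p.getVert (m+1)) t := by
            simpa using hT2len
          omega
        have hQ2 : (Walk.cons hadj (Walk.cons hTc Trest)).IsPath :=
          (Walk.cons_isPath_iff _ _).mpr ⟨hT, hwT⟩
        have hne2 : p.getVert (m+2) ≠ b := by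
          intro h; rw [← h] at hc_lev; omega
        obtain ⟨C', hC', hC'e1, hC'e2, _⟩ :=
          two_paths_cycle hadj hTb (Walk.cons hTc Trest) T2rest hQ2 hT2 hne2
        have hiff := hcac _ _ C C' hC hC' s(p.getVert (m+1), p.getVert (m+2)) hCe1 hC'e1
          s(p.getVert (m+1), b)
        have hbC : s(p.getVert (m+1), b) ∈ C.edges := hiff.mpr hC'e2
        have hbmem : b ∈ C.support := Walk.snd_mem_support_of_mem_edges C hbC
        have := hClev b hbmem
        omega
      · -- DOWN case : dist s (getVert (m+2)) = m, dist s (getVert (m+1)) = m+1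
        have hdown2 : G.dist s (p.getVert (m+2)) = m := hdown
        have hWy2 : G.dist s (p.getVert (m+2)) + G.dist (p.getVert (m+2)) t = G.dist s t := hWy
        have hi2 : m + 2 ≤ p.length := hi
        have hadj2 : G.Adj (p.getVert (m+1)) (p.getVert (m+2)) := hadj
        have hx : G.dist s (p.getVert m) = m := ih m (by omega) (by omega)
        have hadj_xw : G.Adj (p.getVert m) (p.getVert (m+1)) := p.adj_getVert_succ (by omega)
        have hxy : p.getVert m ≠ p.getVert (m+2) := path_getVert_ne hp (by omega) hi
        obtain ⟨gx, hgx, hgxlen⟩ := hconn.exists_path_of_dist s (p.getVert m)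
        obtain ⟨gy, hgy, hgylen⟩ := hconn.exists_path_of_dist s (p.getVert (m+2))
        have hwgx : p.getVert (m+1) ∉ gx.support := by
          intro hmem
          obtain ⟨r, hr, hrle⟩ := Walk.mem_support_iff_exists_getVert.mp hmem
          have h1 := dist_start_getVert hconn gx r
          rw [hr] at h1; omega
        have hwgy : p.getVert (m+1) ∉ gy.support := by
          intro hmem
          obtain ⟨r, hr, hrle⟩ := Walk.mem_support_iff_exists_getVert.mp hmem
          have h1 := dist_start_getVert hconn gy r
          rw [hr] at h1; omega
        have hQ1 : (Walk.cons hadj gy.reverse).IsPath := by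
          rw [Walk.cons_isPath_iff]
          refine ⟨hgy.reverse, ?_⟩
          rw [Walk.support_reverse, List.mem_reverse]
          exact hwgy
        have hP1 : (Walk.cons hadj_xw.symm gx.reverse).IsPath := by
          rw [Walk.cons_isPath_iff]
          refine ⟨hgx.reverse, ?_⟩
          rw [Walk.support_reverse, List.mem_reverse]
          exact hwgx
        obtain ⟨C, hC, hCe1, _, hCsup⟩ :=
          two_paths_cycle hadj hadj_xw.symm gy.reverse gx.reverse hQ1 hP1 hxy.symm
        have hClev : ∀ v ∈ C.support, G.dist s v ≤ m + 1 := by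
          intro v hv
          rcases hCsup v hv with hv | hv <;> rw [Walk.support_cons] at hv <;>
            rcases List.mem_cons.mp hv with rfl | hv
          · omega
          · rw [Walk.support_reverse, List.mem_reverse] at hv
            obtain ⟨r, hr, hrle⟩ := Walk.mem_support_iff_exists_getVert.mp hv
            have h1 := dist_start_getVert hconn gy r
            rw [hr] at h1; omega
          · omega
          · rw [Walk.support_reverse, List.mem_reverse] at hv
            obtain ⟨r, hr, hrle⟩ := Walk.mem_support_iff_exists_getVert.mp hv
            have h1 := dist_start_getVert hconn gx r
            rw [hr] at h1; omega
        have hwt : p.getVert (m+1) ≠ t := by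
          intro h
          have := path_getVert_ne hp (show m+1 < p.length by omega) le_rfl
          rw [Walk.getVert_length] at this
          exact this h
        obtain ⟨T, hT, hTlen⟩ := hconn.exists_path_of_dist (p.getVert (m+1)) t
        obtain ⟨r0, hr0path, hr0w⟩ := exists_tail_path p hp (m+2) (by omega) hi
        have hTnn : ¬ T.Nil := by
          rw [Walk.nil_iff_length_eq, hTlen]
          have := hconn.pos_dist_of_ne hwt
          omega
        obtain ⟨b, hTb, Trest, rfl⟩ := Walk.not_nil_iff.mp hTnn
        have hb_lev : m + 2 ≤ G.dist s b := by
          have h1 : G.dist b t ≤ Trest.length := SimpleGraph.dist_le Trest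
          have h2 : G.dist s t ≤ G.dist s b + G.dist b t := hconn.dist_triangle
          have h3 : Trest.length + 1 = G.dist (p.getVert (m+1)) t := by
            simpa using hTlen
          omega
        have hQ2 : (Walk.cons hadj r0).IsPath := by
          rw [Walk.cons_isPath_iff]
          refine ⟨hr0path, ?_⟩
          simpa using hr0w
        have hne2 : p.getVert (m+2) ≠ b := by
          intro h; rw [← h] at hb_lev; omega
        obtain ⟨C', hC', hC'e1, hC'e2, _⟩ :=
          two_paths_cycle hadj hTb r0 Trest hQ2 hT hne2
        have hiff := hcac _ _ C C' hC hC' s(p.getVert (m+1), p.getVert (m+2)) hCe1 hC'e1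
          s(p.getVert (m+1), b)
        have hbC : s(p.getVert (m+1), b) ∈ C.edges := hiff.mpr hC'e2
        have hbmem : b ∈ C.support := Walk.snd_mem_support_of_mem_edges C hbC
        have := hClev b hbmem
        omega
  have hfin := key p.length le_rfl
  rw [Walk.getVert_length] at hfin
  rw [← hplen]
  omega
end

section
/- Let d ≥ 3 and p ≥ 1. Let B_d be the graph obtained from the complete graph K_{d−1} by adding two new nonadjacent vertices, each adjacent to all d − 1 vertices of the K_{d−1} (so B_d has d − 1 vertices of degree d and two vertices of degree d − 1). Let D be obtained by chaining p disjoint copies of B_d: for each i ∈ {1,…,p−1}, add an edge joining one degree-(d−1) vertex of the i-th copy to one degree-(d−1) vertex of the (i+1)-st copy, using each degree-(d−1) vertex for at most one such edge. Then in D every vertex has degree d except exactly two vertices (the unused degree-(d−1) vertex of the first copy and the unused degree-(d−1) vertex of the last copy), which have degree d − 1, and the diameter of D equals 3p − 1. -/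
open SimpleGraph

/-- The adjacency relation generating the detour gadget `D` made of `p` chained copies of
the building block `B_d` (a `K_{d-1}`, the `Sum.inl` vertices of each copy, plus two
nonadjacent vertices, the `Sum.inr` vertices, each adjacent to all of the `K_{d-1}`):
copy `i`'s second special vertex (`Sum.inr 1`) is joined to copy `i+1`'s first special
vertex (`Sum.inr 0`), so each degree-`(d-1)` vertex of a block is used for at most one
chaining edge. -/
def DetourRel (d p : ℕ) :
    Fin p × (Fin (d - 1) ⊕ Fin 2) → Fin p × (Fin (d - 1) ⊕ Fin 2) → Prop
  | (i, .inl a), (j, .inl b) => i = j ∧ a ≠ b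
  | (i, .inl _), (j, .inr _) => i = j
  | (i, .inr _), (j, .inl _) => i = j
  | (i, .inr s), (j, .inr s') => (i : ℕ) + 1 = (j : ℕ) ∧ s = 1 ∧ s' = 0

/-- The detour gadget obtained by chaining `p` disjoint copies of `B_d`. -/
def detour (d p : ℕ) : SimpleGraph (Fin p × (Fin (d - 1) ⊕ Fin 2)) :=
  SimpleGraph.fromRel (DetourRel d p)

namespace St17

variable {d p : ℕ}

lemma adj_ll {i j : Fin p} {a b : Fin (d-1)} :
    (detour d p).Adj (i, .inl a) (j, .inl b) ↔ i = j ∧ a ≠ b := by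
  simp only [detour, fromRel_adj, DetourRel]
  constructor
  · rintro ⟨hne, (⟨rfl, hab⟩|⟨rfl, hab⟩)⟩
    exacts [⟨rfl, hab⟩, ⟨rfl, hab.symm⟩]
  · rintro ⟨rfl, hab⟩; exact ⟨by simp [hab], Or.inl ⟨rfl, hab⟩⟩

lemma adj_lr {i j : Fin p} {a : Fin (d-1)} {s : Fin 2} :
    (detour d p).Adj (i, .inl a) (j, .inr s) ↔ i = j := by
  simp only [detour, fromRel_adj, DetourRel]
  constructor
  · rintro ⟨hne, (rfl|rfl)⟩ <;> rfl
  · rintro rfl; exact ⟨by simp, Or.inl rfl⟩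

lemma adj_rl {i j : Fin p} {a : Fin (d-1)} {s : Fin 2} :
    (detour d p).Adj (i, .inr s) (j, .inl a) ↔ i = j := by
  rw [SimpleGraph.adj_comm, adj_lr, eq_comm]

lemma adj_rr {i j : Fin p} {s s' : Fin 2} :
    (detour d p).Adj (i, .inr s) (j, .inr s') ↔
      ((i : ℕ) + 1 = (j : ℕ) ∧ s = 1 ∧ s' = 0) ∨ ((j : ℕ) + 1 = (i : ℕ) ∧ s' = 1 ∧ s = 0) := by
  simp only [detour, fromRel_adj, DetourRel]
  constructor
  · rintro ⟨hne, h⟩; exact h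
  · rintro (⟨h, rfl, rfl⟩|⟨h, rfl, rfl⟩) <;> exact ⟨by simp, by tauto⟩

/-! ### Neighbor sets -/

lemma ncard_ne {α : Type*} [Fintype α] (a : α) :
    ({b | b ≠ a} : Set α).ncard = Fintype.card α - 1 := by
  have h := Set.ncard_add_ncard_compl ({a} : Set α)
  have h2 : ({a}ᶜ : Set α) = {b | b ≠ a} := by ext; simp
  rw [h2, Set.ncard_singleton] at h
  rw [Nat.card_eq_fintype_card] at h
  omega

lemma inl_inj (i : Fin p) :
    Function.Injective (fun b : Fin (d-1) => ((i, Sum.inl b) : Fin p × (Fin (d-1) ⊕ Fin 2))) := by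
  intro x y h; simpa using h

lemma nbhd_l (i : Fin p) (a : Fin (d-1)) :
    (detour d p).neighborSet (i, .inl a) =
      (fun b : Fin (d-1) => ((i, Sum.inl b) : Fin p × (Fin (d-1) ⊕ Fin 2))) '' {b | b ≠ a} ∪
      (fun s : Fin 2 => ((i, Sum.inr s) : Fin p × (Fin (d-1) ⊕ Fin 2))) '' Set.univ := by
  ext ⟨j, (b|s)⟩ <;>
    simp [SimpleGraph.mem_neighborSet, adj_ll, adj_lr, Prod.ext_iff, eq_comm] <;> tauto

lemma deg_l (hd : 3 ≤ d) (i : Fin p) (a : Fin (d-1)) :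
    ((detour d p).neighborSet (i, Sum.inl a)).ncard = d := by
  rw [nbhd_l, Set.ncard_union_eq, Set.ncard_image_of_injective _ (inl_inj i),
    Set.ncard_image_of_injective _ (by intro x y h; simpa using h), ncard_ne,
    Set.ncard_univ, Nat.card_eq_fintype_card]
  · simp only [Fintype.card_fin]; omega
  · simp [Set.disjoint_left]

lemma nbhd_r_end (hp : 1 ≤ p) (i : Fin p) (s : Fin 2)
    (h : ((i : ℕ) = 0 ∧ s = 0) ∨ ((i : ℕ) = p - 1 ∧ s = 1)) :
    (detour d p).neighborSet (i, .inr s) =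
      (fun b : Fin (d-1) => ((i, Sum.inl b) : Fin p × (Fin (d-1) ⊕ Fin 2))) '' Set.univ := by
  ext ⟨j, (b|s')⟩ <;>
    simp [SimpleGraph.mem_neighborSet, adj_rl, adj_rr, Prod.ext_iff, eq_comm]
  rcases h with ⟨h1, rfl⟩ | ⟨h1, rfl⟩ <;>
    refine ⟨fun h2 h3 h4 => ?_, fun h2 h3 h4 => ?_⟩ <;>
      first
        | exact absurd h3 (by decide)
        | exact absurd h4 (by decide)
        | omega
        | (have := j.isLt; omega)

lemma deg_r_end (hd : 3 ≤ d) (hp : 1 ≤ p) (i : Fin p) (s : Fin 2)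
    (h : ((i : ℕ) = 0 ∧ s = 0) ∨ ((i : ℕ) = p - 1 ∧ s = 1)) :
    ((detour d p).neighborSet (i, Sum.inr s)).ncard = d - 1 := by
  rw [nbhd_r_end hp i s h, Set.ncard_image_of_injective _ (inl_inj i),
    Set.ncard_univ, Nat.card_eq_fintype_card, Fintype.card_fin]

lemma nbhd_r_mid (hp : 1 ≤ p) (i : Fin p) (s : Fin 2)
    (h : ¬(((i : ℕ) = 0 ∧ s = 0) ∨ ((i : ℕ) = p - 1 ∧ s = 1))) :
    ∃ z : Fin p × (Fin (d-1) ⊕ Fin 2), (∃ s' : Fin 2, z.2 = Sum.inr s') ∧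
    (detour d p).neighborSet (i, .inr s) =
      (fun b : Fin (d-1) => ((i, Sum.inl b) : Fin p × (Fin (d-1) ⊕ Fin 2))) '' Set.univ ∪ {z} := by
  have hs : s = 0 ∨ s = 1 := by fin_cases s <;> simp
  rcases hs with rfl | rfl
  · -- s = 0, so i ≠ 0 ; neighbor (i-1, inr 1)
    have hi : (i : ℕ) ≠ 0 := by tauto
    refine ⟨(⟨(i : ℕ) - 1, by omega⟩, .inr 1), ⟨1, rfl⟩, ?_⟩
    ext ⟨j, (b|s')⟩ <;>
      simp [SimpleGraph.mem_neighborSet, adj_rl, adj_rr, Prod.ext_iff, Fin.ext_iff, eq_comm, -Fin.val_eq_zero_iff]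
    have := j.isLt; have := s'.isLt; omega
  · -- s = 1, so i ≠ p - 1 ; neighbor (i+1, inr 0)
    have hi : (i : ℕ) ≠ p - 1 := by tauto
    have hlt : (i : ℕ) + 1 < p := by have := i.isLt; omega
    refine ⟨(⟨(i : ℕ) + 1, hlt⟩, .inr 0), ⟨0, rfl⟩, ?_⟩
    ext ⟨j, (b|s')⟩ <;>
      simp [SimpleGraph.mem_neighborSet, adj_rl, adj_rr, Prod.ext_iff, Fin.ext_iff, eq_comm, -Fin.val_eq_zero_iff]

lemma deg_r_mid (hd : 3 ≤ d) (hp : 1 ≤ p) (i : Fin p) (s : Fin 2)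
    (h : ¬(((i : ℕ) = 0 ∧ s = 0) ∨ ((i : ℕ) = p - 1 ∧ s = 1))) :
    ((detour d p).neighborSet (i, Sum.inr s)).ncard = d := by
  obtain ⟨z, ⟨s', hz⟩, hset⟩ := nbhd_r_mid (d := d) hp i s h
  rw [hset, Set.ncard_union_eq, Set.ncard_image_of_injective _ (inl_inj i),
    Set.ncard_univ, Nat.card_eq_fintype_card, Fintype.card_fin, Set.ncard_singleton]
  · omega
  · simp only [Set.disjoint_left]
    rintro x ⟨b, -, rfl⟩ hx
    simp only [Set.mem_singleton_iff] at hx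
    rw [← hx] at hz
    simp at hz

/-! ### Walks and distance -/

lemma exists_block_walk (hd : 3 ≤ d) (i : Fin p) (x y : Fin (d-1) ⊕ Fin 2) :
    ∃ w : (detour d p).Walk (i, x) (i, y), w.length ≤ 2 := by
  have a0 : Fin (d-1) := ⟨0, by omega⟩
  match x, y with
  | .inl a, .inl b =>
    by_cases h : a = b
    · subst h; exact ⟨.nil, by simp⟩
    · exact ⟨.cons (adj_ll.mpr ⟨rfl, h⟩) .nil, by simp⟩
  | .inl a, .inr s => exact ⟨.cons (adj_lr.mpr rfl) .nil, by simp⟩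
  | .inr s, .inl a => exact ⟨.cons (adj_rl.mpr rfl) .nil, by simp⟩
  | .inr s, .inr s' =>
    by_cases h : s = s'
    · subst h; exact ⟨.nil, by simp⟩
    · exact ⟨.cons ((adj_rl (a := a0)).mpr rfl) (.cons (adj_lr.mpr rfl) .nil), by simp⟩

lemma exists_chain_walk (hd : 3 ≤ d) (k : ℕ) : ∀ (i : ℕ) (h : i + k + 1 < p),
    ∃ w : (detour d p).Walk (⟨i, by omega⟩, .inr 1) (⟨i + k + 1, h⟩, .inr 0),
      w.length ≤ 3 * k + 1 := by
  induction k with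
  | zero =>
    intro i h
    exact ⟨.cons (adj_rr.mpr (Or.inl ⟨rfl, rfl, rfl⟩)) .nil, by simp⟩
  | succ k ih =>
    intro i h
    have h' : (i + 1) + k + 1 < p := by omega
    obtain ⟨w', hw'⟩ := ih (i + 1) h'
    obtain ⟨wb, hwb⟩ := exists_block_walk (p := p) hd ⟨i + 1, by omega⟩ (.inr 0) (.inr 1)
    have e1 : (detour d p).Adj (⟨i, by omega⟩, .inr 1) (⟨i + 1, by omega⟩, .inr 0) :=
      adj_rr.mpr (Or.inl ⟨rfl, rfl, rfl⟩)
    refine ⟨(Walk.cons e1 (wb.append w')).copy rfl ?_, ?_⟩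
    · congr 1; ext; simp; omega
    · simp only [Walk.length_copy, Walk.length_cons, Walk.length_append]
      omega

lemma exists_walk_any (hd : 3 ≤ d) (hp : 1 ≤ p)
    (x y : Fin p × (Fin (d-1) ⊕ Fin 2)) :
    ∃ w : (detour d p).Walk x y, w.length ≤ 3 * p - 1 := by
  have key : ∀ (x y : Fin p × (Fin (d-1) ⊕ Fin 2)), (x.1 : ℕ) ≤ (y.1 : ℕ) →
      ∃ w : (detour d p).Walk x y, w.length ≤ 3 * p - 1 := by
    rintro ⟨i, u⟩ ⟨j, v⟩ hij
    simp only at hij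
    rcases eq_or_lt_of_le hij with heq | hlt
    · have : i = j := Fin.ext heq
      subst this
      obtain ⟨w, hw⟩ := exists_block_walk (p := p) hd i u v
      exact ⟨w, by omega⟩
    · set k := (j : ℕ) - (i : ℕ) - 1 with hk
      have hkp : (i : ℕ) + k + 1 < p := by have := j.isLt; omega
      obtain ⟨w1, hw1⟩ := exists_block_walk (p := p) hd i u (.inr 1)
      obtain ⟨w2, hw2⟩ := exists_chain_walk (p := p) hd k (i : ℕ) hkp
      obtain ⟨w3, hw3⟩ := exists_block_walk (p := p) hd j (.inr 0) v
      have ec : ((⟨(i : ℕ), by omega⟩ : Fin p), (Sum.inr 1 : Fin (d-1) ⊕ Fin 2)) = (i, .inr 1) := by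
        congr 1
      have ec2 : ((⟨(i : ℕ) + k + 1, hkp⟩ : Fin p), (Sum.inr 0 : Fin (d-1) ⊕ Fin 2)) = (j, .inr 0) := by
        congr 1; ext; simp; omega
      refine ⟨w1.append ((w2.copy ec ec2).append w3), ?_⟩
      simp only [Walk.length_append, Walk.length_copy]
      have := j.isLt
      omega
  rcases le_total (x.1 : ℕ) (y.1 : ℕ) with h | h
  · exact key x y h
  · obtain ⟨w, hw⟩ := key y x h
    exact ⟨w.reverse, by simpa using hw⟩

def pot (x : Fin p × (Fin (d-1) ⊕ Fin 2)) : ℕ :=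
  3 * (x.1 : ℕ) + Sum.elim (fun _ => 1) (fun s : Fin 2 => 2 * (s : ℕ)) x.2

lemma pot_adj {x y : Fin p × (Fin (d-1) ⊕ Fin 2)} (h : (detour d p).Adj x y) :
    pot y ≤ pot x + 1 := by
  obtain ⟨i, (a|s)⟩ := x <;> obtain ⟨j, (b|s')⟩ := y
  · rw [adj_ll] at h; obtain ⟨rfl, -⟩ := h; simp [pot]
  · rw [adj_lr] at h; subst h; simp [pot]
    have := s'.isLt; omega
  · rw [adj_rl] at h; subst h; simp [pot]
  · rw [adj_rr] at h
    simp only [pot]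
    rcases h with ⟨h1, rfl, rfl⟩ | ⟨h1, rfl, rfl⟩ <;> simp <;> omega

lemma pot_walk {x y : Fin p × (Fin (d-1) ⊕ Fin 2)} (w : (detour d p).Walk x y) :
    pot y ≤ pot x + w.length := by
  induction w with
  | nil => simp
  | cons h q ih =>
    have := pot_adj h
    simp only [Walk.length_cons]
    omega

end St17


/-- In the detour gadget built from `p ≥ 1` chained copies of `B_d` (`d ≥ 3`), every
vertex has degree `d` except exactly the two end vertices — the unused degree-`(d-1)`
vertex of the first copy and the unused degree-`(d-1)` vertex of the last copy — which
have degree `d - 1`; moreover the diameter equals `3p - 1`. -/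
theorem stmt17 (d p : ℕ) (hd : 3 ≤ d) (hp : 1 ≤ p) :
    (∀ (i : Fin p) (a : Fin (d - 1)),
        ((detour d p).neighborSet (i, Sum.inl a)).ncard = d) ∧
    (∀ (i : Fin p) (s : Fin 2),
        ¬(((i : ℕ) = 0 ∧ s = 0) ∨ ((i : ℕ) = p - 1 ∧ s = 1)) →
        ((detour d p).neighborSet (i, Sum.inr s)).ncard = d) ∧
    (∀ (i : Fin p) (s : Fin 2),
        (((i : ℕ) = 0 ∧ s = 0) ∨ ((i : ℕ) = p - 1 ∧ s = 1)) →
        ((detour d p).neighborSet (i, Sum.inr s)).ncard = d - 1) ∧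
    (∀ x y, (detour d p).dist x y ≤ 3 * p - 1) ∧
    (∃ x y, (detour d p).dist x y = 3 * p - 1) := by
  refine ⟨fun i a => St17.deg_l hd i a, fun i s h => St17.deg_r_mid hd hp i s h,
    fun i s h => St17.deg_r_end hd hp i s h, fun x y => ?_, ?_⟩
  · obtain ⟨w, hw⟩ := St17.exists_walk_any hd hp x y
    exact le_trans (SimpleGraph.dist_le w) hw
  · refine ⟨(⟨0, by omega⟩, .inr 0), (⟨p - 1, by omega⟩, .inr 1), ?_⟩
    obtain ⟨w0, hw0⟩ := St17.exists_walk_any hd hp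
      ((⟨0, by omega⟩, .inr 0) : Fin p × (Fin (d-1) ⊕ Fin 2)) (⟨p - 1, by omega⟩, .inr 1)
    have hub := le_trans (SimpleGraph.dist_le w0) hw0
    have hreach : (detour d p).Reachable (⟨0, by omega⟩, .inr 0) (⟨p - 1, by omega⟩, .inr 1) :=
      ⟨w0⟩
    obtain ⟨w, hw⟩ := hreach.exists_walk_length_eq_dist
    have hpw := St17.pot_walk w
    have hx : St17.pot ((⟨0, by omega⟩ : Fin p), (Sum.inr 0 : Fin (d-1) ⊕ Fin 2)) = 0 := by
      simp [St17.pot]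
    have hy : St17.pot ((⟨p - 1, by omega⟩ : Fin p), (Sum.inr 1 : Fin (d-1) ⊕ Fin 2)) =
        3 * (p - 1) + 2 := by
      simp [St17.pot]
    omega
end
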